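/- arXiv:0807.3972 — 9 statements merged into one kernel-verified Lean document; each statement's English description precedes it below -/
import Mathlib

section
/- Let t ∈ ℝ, s = 1/2 + it, and let f : D → ℝ be a bounded, twice continuously differentiable function on the open unit disk D ⊂ ℂ satisfying ((1−|z|²)²/4)·(∂²f/∂x² + ∂²f/∂y²)(z) = −(1/4 + t²)·f(z) on D. Let D̃ : [0,2π] → ℂ be the continuous function with D̃(0) = 0 to which α ↦ ∫₀^α K(r,θ) dθ converges uniformly as r → +∞, where K(r,θ) = e^{−sr}·(∂F/∂r(r,θ) + s·F(r,θ))·sinh(r) and F(r,θ) = f(tanh(r/2)e^{iθ}). Then for every 0 ≤ α < β ≤ 2π and every continuously differentiable ψ : ℂ → ℂ, setting ψ̃(θ) = ψ(e^{iθ}), one has lim_{r→+∞} ∫_α^β ψ(tanh(r/2)e^{iθ})·K(r,θ) dθ = ψ̃(β)·D̃(β) − ψ̃(α)·D̃(α) − ∫_α^β ψ̃'(θ)·D̃(θ) dθ. -/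
open Complex Real Set Filter MeasureTheory Topology

noncomputable section

/-- The Euclidean Laplacian `∂²f/∂x² + ∂²f/∂y²` of `f : ℂ → ℝ` at `z`. -/
def lap2 (f : ℂ → ℝ) (z : ℂ) : ℝ :=
  deriv (fun x : ℝ => deriv (fun u : ℝ => f ((u : ℂ) + z.im * Complex.I)) x) z.re +
  deriv (fun y : ℝ => deriv (fun v : ℝ => f ((z.re : ℂ) + v * Complex.I)) y) z.im

/-- `F(r,θ) = f(tanh(r/2)·e^{iθ})`. -/
def Fpol (f : ℂ → ℝ) (r θ : ℝ) : ℝ :=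
  f ((Real.tanh (r / 2) : ℂ) * Complex.exp (θ * Complex.I))

/-- `K(r,θ) = e^{−sr}·(∂F/∂r(r,θ) + s·F(r,θ))·sinh r`. -/
def Kker (f : ℂ → ℝ) (s : ℂ) (r θ : ℝ) : ℂ :=
  Complex.exp (-s * r) *
    ((deriv (fun r' : ℝ => Fpol f r' θ) r : ℂ) + s * (Fpol f r θ : ℂ)) * (Real.sinh r : ℂ)

lemma tanh_lt_one' (x : ℝ) : |Real.tanh x| < 1 := by
  rw [Real.tanh_eq_sinh_div_cosh, abs_div, abs_of_pos (Real.cosh_pos x),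
    div_lt_one (Real.cosh_pos x), abs_lt]
  constructor
  · nlinarith [Real.sinh_add_cosh x, Real.exp_pos x]
  · nlinarith [Real.cosh_sub_sinh x, Real.exp_pos (-x)]

lemma hasDerivAt_tanh' (x : ℝ) : HasDerivAt Real.tanh (1 - Real.tanh x ^ 2) x := by
  have h := (Real.hasDerivAt_sinh x).div (Real.hasDerivAt_cosh x) (Real.cosh_pos x).ne'
  have : ∀ y, Real.sinh y / Real.cosh y = Real.tanh y := fun y =>
    (Real.tanh_eq_sinh_div_cosh y).symm
  replace h : HasDerivAt Real.tanh _ x := h.congr_of_eventuallyEq (Filter.Eventually.of_forall fun y => Real.tanh_eq_sinh_div_cosh y)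
  convert h using 1
  have hc := (Real.cosh_pos x).ne'
  rw [Real.tanh_eq_sinh_div_cosh]
  field_simp

lemma tendsto_tanh_atTop' : Tendsto Real.tanh atTop (𝓝 1) := by
  have key : ∀ x : ℝ, Real.tanh x = 1 - 2 / (Real.exp (2 * x) + 1) := by
    intro x
    rw [Real.tanh_eq_sinh_div_cosh, Real.sinh_eq, Real.cosh_eq]
    have h1 : Real.exp x ≠ 0 := (Real.exp_pos x).ne'
    have h2 : Real.exp (2 * x) + 1 > 0 := by positivity
    have h3 : Real.exp (2 * x) = Real.exp x * Real.exp x := by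
      rw [← Real.exp_add]; ring_nf
    have h4 : Real.exp (-x) = 1 / Real.exp x := by
      rw [Real.exp_neg]; exact inv_eq_one_div _
    rw [h4, h3]
    field_simp
    ring
  rw [show Real.tanh = fun x => 1 - 2 / (Real.exp (2 * x) + 1) from funext key]
  have : Tendsto (fun x : ℝ => 2 / (Real.exp (2 * x) + 1)) atTop (𝓝 0) := by
    apply Tendsto.div_atTop tendsto_const_nhds
    exact (Real.tendsto_exp_atTop.comp (tendsto_id.const_mul_atTop two_pos)).atTop_add
      tendsto_const_nhds
  have := tendsto_const_nhds.sub this (f := fun _ : ℝ => (1:ℝ))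
  simpa using this

/-- the point `tanh(r/2)e^{iθ}` -/
def zm (r θ : ℝ) : ℂ := (Real.tanh (r / 2) : ℂ) * Complex.exp (θ * Complex.I)

lemma zm_mem_ball (r θ : ℝ) : zm r θ ∈ Metric.ball (0 : ℂ) 1 := by
  simp only [zm, Metric.mem_ball, dist_zero_right, norm_mul,
    Complex.norm_exp_ofReal_mul_I, mul_one, Complex.norm_real, Real.norm_eq_abs]
  exact tanh_lt_one' _

lemma norm_zm_le (r θ : ℝ) : ‖zm r θ‖ ≤ 1 := by
  simp only [zm, norm_mul, Complex.norm_exp_ofReal_mul_I, mul_one,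
    Complex.norm_real, Real.norm_eq_abs]
  exact (tanh_lt_one' _).le

/-- derivative of the circle curve -/
lemma hasDerivAt_circle (c θ : ℝ) :
    HasDerivAt (fun θ' : ℝ => (c : ℂ) * Complex.exp (θ' * Complex.I))
      ((c : ℂ) * Complex.exp (θ * Complex.I) * Complex.I) θ := by
  have h1 : HasDerivAt (fun θ' : ℝ => (θ' : ℂ) * Complex.I) Complex.I θ := by
    simpa using (Complex.ofRealCLM.hasDerivAt (x := θ)).mul_const Complex.I
  have h2 : HasDerivAt (fun θ' : ℝ => Complex.exp ((θ' : ℂ) * Complex.I))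
      (Complex.exp (θ * Complex.I) * Complex.I) θ := h1.cexp
  simpa [mul_assoc] using h2.const_mul (c : ℂ)

/-- derivative of the radial curve -/
lemma hasDerivAt_radial (r θ : ℝ) :
    HasDerivAt (fun r' : ℝ => (Real.tanh (r' / 2) : ℂ) * Complex.exp (θ * Complex.I))
      ((((1 - Real.tanh (r / 2) ^ 2) / 2 : ℝ) : ℂ) * Complex.exp (θ * Complex.I)) r := by
  have h1 : HasDerivAt (fun r' : ℝ => Real.tanh (r' / 2))
      ((1 - Real.tanh (r / 2) ^ 2) / 2) r := by
    have := (hasDerivAt_tanh' (r / 2)).comp r ((hasDerivAt_id r).div_const 2)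
    simpa [div_eq_mul_inv, mul_comm, Function.comp_def] using this
  have h2 := (h1.ofReal_comp).mul_const (Complex.exp (θ * Complex.I))
  simpa using h2

section
variable {f : ℂ → ℝ}

lemma f_diffAt (hf : ContDiffOn ℝ 2 f (Metric.ball (0 : ℂ) 1)) (r θ : ℝ) :
    DifferentiableAt ℝ f (zm r θ) :=
  (hf.differentiableOn two_ne_zero).differentiableAt
    (Metric.isOpen_ball.mem_nhds (zm_mem_ball r θ))

lemma hasDerivAt_Fpol (hf : ContDiffOn ℝ 2 f (Metric.ball (0 : ℂ) 1)) (r θ : ℝ) :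
    HasDerivAt (fun r' : ℝ => Fpol f r' θ)
      ((fderiv ℝ f (zm r θ))
        ((((1 - Real.tanh (r / 2) ^ 2) / 2 : ℝ) : ℂ) * Complex.exp (θ * Complex.I))) r :=
  ((f_diffAt hf r θ).hasFDerivAt).comp_hasDerivAt r (hasDerivAt_radial r θ)

lemma deriv_Fpol (hf : ContDiffOn ℝ 2 f (Metric.ball (0 : ℂ) 1)) (r θ : ℝ) :
    deriv (fun r' : ℝ => ((Fpol f r' θ : ℝ) : ℂ)) r =
      ((fderiv ℝ f (zm r θ))
        ((((1 - Real.tanh (r / 2) ^ 2) / 2 : ℝ) : ℂ) * Complex.exp (θ * Complex.I)) : ℝ) :=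
  ((hasDerivAt_Fpol hf r θ).ofReal_comp).deriv

lemma continuous_zm (r : ℝ) : Continuous (zm r) := by
  unfold zm; fun_prop

lemma continuous_Kker (hf : ContDiffOn ℝ 2 f (Metric.ball (0 : ℂ) 1)) (s : ℂ) (r : ℝ) :
    Continuous (fun θ => Kker f s r θ) := by
  have hfc : ContinuousOn f (Metric.ball (0 : ℂ) 1) := hf.continuousOn
  have hfd : ContinuousOn (fderiv ℝ f) (Metric.ball (0 : ℂ) 1) :=
    hf.continuousOn_fderiv_of_isOpen Metric.isOpen_ball one_le_two
  have hF : Continuous (fun θ => Fpol f r θ) := by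
    have : (fun θ => Fpol f r θ) = f ∘ zm r := rfl
    rw [this]
    exact hfc.comp_continuous (continuous_zm r) (fun θ => zm_mem_ball r θ)
  have hdF : Continuous (fun θ => deriv (fun r' : ℝ => ((Fpol f r' θ : ℝ) : ℂ)) r) := by
    have heq : (fun θ => deriv (fun r' : ℝ => ((Fpol f r' θ : ℝ) : ℂ)) r) = fun θ =>
        (((fderiv ℝ f (zm r θ))
          ((((1 - Real.tanh (r / 2) ^ 2) / 2 : ℝ) : ℂ) * Complex.exp (θ * Complex.I)) : ℝ) : ℂ) := by
      funext θ; exact deriv_Fpol hf r θ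
    rw [heq]
    have h1 : Continuous (fun θ => fderiv ℝ f (zm r θ)) :=
      hfd.comp_continuous (continuous_zm r) (fun θ => zm_mem_ball r θ)
    have h2 : Continuous (fun θ : ℝ =>
        ((((1 - Real.tanh (r / 2) ^ 2) / 2 : ℝ) : ℂ) * Complex.exp (θ * Complex.I))) := by
      fun_prop
    exact Complex.continuous_ofReal.comp
      (isBoundedBilinearMap_apply.continuous.comp (h1.prodMk h2))
  unfold Kker
  exact (continuous_const.mul (hdF.add (continuous_const.mul
    (Complex.continuous_ofReal.comp hF)))).mul continuous_const

end

/-- Proposition 2 of the paper: the Helgason distribution extends to `C¹` test functions on a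
boundary interval `{e^{iθ} : α ≤ θ ≤ β}`, computed by integration by parts against `D̃`. -/
theorem stmt4 (t : ℝ) (f : ℂ → ℝ)
    (hf_bdd : ∃ M : ℝ, ∀ z ∈ Metric.ball (0 : ℂ) 1, |f z| ≤ M)
    (hf_reg : ContDiffOn ℝ 2 f (Metric.ball (0 : ℂ) 1))
    (hf_eig : ∀ z ∈ Metric.ball (0 : ℂ) 1,
      (1 - ‖z‖ ^ 2) ^ 2 / 4 * lap2 f z = -(1 / 4 + t ^ 2) * f z)
    (Dt : ℝ → ℂ)
    (hDt_cont : ContinuousOn Dt (Icc 0 (2 * π)))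
    (hDt_zero : Dt 0 = 0)
    (hDt_lim : TendstoUniformlyOn
      (fun (r : ℝ) (α : ℝ) => ∫ θ in (0 : ℝ)..α, Kker f (1 / 2 + t * Complex.I) r θ)
      Dt atTop (Icc 0 (2 * π))) :
    ∀ α β : ℝ, 0 ≤ α → α < β → β ≤ 2 * π →
      ∀ ψ : ℂ → ℂ, ContDiff ℝ 1 ψ →
        Tendsto (fun r : ℝ => ∫ θ in α..β,
            ψ ((Real.tanh (r / 2) : ℂ) * Complex.exp (θ * Complex.I)) *
              Kker f (1 / 2 + t * Complex.I) r θ) atTop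
          (𝓝 (ψ (Complex.exp (β * Complex.I)) * Dt β - ψ (Complex.exp (α * Complex.I)) * Dt α -
            ∫ θ in α..β, deriv (fun θ' : ℝ => ψ (Complex.exp (θ' * Complex.I))) θ * Dt θ)) := by
  intro α β hα hαβ hβ ψ hψ
  set s : ℂ := 1 / 2 + t * Complex.I with hs
  -- basic facts
  have hψd : Differentiable ℝ ψ := hψ.differentiable one_ne_zero
  have hψ' : Continuous (fderiv ℝ ψ) := hψ.continuous_fderiv one_ne_zero
  have hαIcc : α ∈ Icc 0 (2 * π) := ⟨hα, le_of_lt (lt_of_lt_of_le hαβ hβ)⟩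
  have hβIcc : β ∈ Icc 0 (2 * π) := ⟨le_of_lt (lt_of_le_of_lt hα hαβ), hβ⟩
  -- the primitive  H r x = ∫₀ˣ K
  set H : ℝ → ℝ → ℂ := fun r x => ∫ θ in (0 : ℝ)..x, Kker f s r θ with hH
  have hKc : ∀ r : ℝ, Continuous (fun θ => Kker f s r θ) := continuous_Kker hf_reg s
  have hKint : ∀ r a b : ℝ, IntervalIntegrable (Kker f s r) volume a b :=
    fun r a b => (hKc r).intervalIntegrable a b
  have hHderiv : ∀ r x : ℝ, HasDerivAt (H r) (Kker f s r x) x := fun r x =>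
    intervalIntegral.integral_hasDerivAt_right (hKint r 0 x)
      ((hKc r).stronglyMeasurable.stronglyMeasurableAtFilter) (hKc r).continuousAt
  have hHcont : ∀ r : ℝ, Continuous (H r) := fun r =>
    continuous_iff_continuousAt.2 fun x => (hHderiv r x).continuousAt
  -- ψ along the circle of radius c and its derivative
  have hψcirc : ∀ c θ : ℝ, HasDerivAt (fun θ' : ℝ => ψ ((c : ℂ) * Complex.exp (θ' * Complex.I)))
      ((fderiv ℝ ψ ((c : ℂ) * Complex.exp (θ * Complex.I)))
        ((c : ℂ) * Complex.exp (θ * Complex.I) * Complex.I)) θ := fun c θ =>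
    ((hψd _).hasFDerivAt).comp_hasDerivAt θ (hasDerivAt_circle c θ)
  set Ψ : ℝ → ℝ → ℂ := fun c θ => (fderiv ℝ ψ ((c : ℂ) * Complex.exp (θ * Complex.I)))
    ((c : ℂ) * Complex.exp (θ * Complex.I) * Complex.I) with hΨ
  have hΨcont : ∀ c : ℝ, Continuous (Ψ c) := by
    intro c
    have h1 : Continuous (fun θ : ℝ => (c : ℂ) * Complex.exp (θ * Complex.I)) := by fun_prop
    exact isBoundedBilinearMap_apply.continuous.comp
      ((hψ'.comp h1).prodMk (h1.mul continuous_const))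
  -- the integration-by-parts identity, for each r
  have key : ∀ r : ℝ, (∫ θ in α..β, ψ ((Real.tanh (r / 2) : ℂ) * Complex.exp (θ * Complex.I)) *
      Kker f s r θ) =
      ψ (zm r β) * H r β - ψ (zm r α) * H r α -
        ∫ θ in α..β, Ψ (Real.tanh (r / 2)) θ * H r θ := by
    intro r
    exact intervalIntegral.integral_mul_deriv_eq_deriv_mul
      (fun x _ => hψcirc (Real.tanh (r / 2)) x)
      (fun x _ => hHderiv r x)
      ((hΨcont _).intervalIntegrable α β)
      (hKint r α β)
  -- limits of the individual pieces
  have hc : Tendsto (fun r : ℝ => Real.tanh (r / 2)) atTop (𝓝 1) :=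
    tendsto_tanh_atTop'.comp (tendsto_id.atTop_div_const two_pos)
  have hcC : Tendsto (fun r : ℝ => ((Real.tanh (r / 2) : ℝ) : ℂ)) atTop (𝓝 1) := by
    have h := (Complex.continuous_ofReal.tendsto 1).comp hc
    rw [Complex.ofReal_one] at h
    exact h
  have hzm : ∀ θ : ℝ, Tendsto (fun r => zm r θ) atTop (𝓝 (Complex.exp (θ * Complex.I))) := by
    intro θ
    have := hcC.mul_const (Complex.exp (θ * Complex.I))
    simpa [zm] using this
  have hHpt : ∀ x ∈ Icc (0:ℝ) (2 * π), Tendsto (fun r => H r x) atTop (𝓝 (Dt x)) :=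
    fun x hx => hDt_lim.tendsto_at hx
  have hT1 : Tendsto (fun r => ψ (zm r β) * H r β) atTop
      (𝓝 (ψ (Complex.exp (β * Complex.I)) * Dt β)) :=
    ((hψ.continuous.tendsto _).comp (hzm β)).mul (hHpt β hβIcc)
  have hT2 : Tendsto (fun r => ψ (zm r α) * H r α) atTop
      (𝓝 (ψ (Complex.exp (α * Complex.I)) * Dt α)) :=
    ((hψ.continuous.tendsto _).comp (hzm α)).mul (hHpt α hαIcc)
  -- dominated convergence for the integral term
  obtain ⟨C₁, hC₁⟩ := (isCompact_closedBall (0:ℂ) 1).exists_bound_of_continuousOn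
    hψ'.continuousOn
  obtain ⟨C₂, hC₂⟩ := (isCompact_Icc (a := (0:ℝ)) (b := 2 * π)).exists_bound_of_continuousOn
    hDt_cont
  have hC₁0 : 0 ≤ C₁ := le_trans (norm_nonneg _) (hC₁ 0 (Metric.mem_closedBall_self zero_le_one))
  have hΨbd : ∀ r θ : ℝ, ‖Ψ (Real.tanh (r / 2)) θ‖ ≤ C₁ := by
    intro r θ
    have hz : ((Real.tanh (r / 2) : ℝ) : ℂ) * Complex.exp (θ * Complex.I) ∈
        Metric.closedBall (0:ℂ) 1 := by
      rw [Metric.mem_closedBall, dist_zero_right]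
      exact norm_zm_le r θ
    calc ‖Ψ (Real.tanh (r / 2)) θ‖
        ≤ ‖fderiv ℝ ψ (((Real.tanh (r / 2) : ℝ) : ℂ) * Complex.exp (θ * Complex.I))‖ *
          ‖((Real.tanh (r / 2) : ℝ) : ℂ) * Complex.exp (θ * Complex.I) * Complex.I‖ :=
        ContinuousLinearMap.le_opNorm _ _
      _ ≤ C₁ * 1 := by
        apply mul_le_mul (hC₁ _ hz) ?_ (norm_nonneg _) hC₁0
        calc ‖((Real.tanh (r / 2) : ℝ) : ℂ) * Complex.exp (θ * Complex.I) * Complex.I‖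
            = ‖zm r θ‖ * ‖Complex.I‖ := by rw [norm_mul]; rfl
          _ = ‖zm r θ‖ := by rw [Complex.norm_I, mul_one]
          _ ≤ 1 := norm_zm_le r θ
      _ = C₁ := mul_one _
  have hHbd : ∀ᶠ r : ℝ in atTop, ∀ x ∈ Icc (0:ℝ) (2 * π), ‖H r x‖ ≤ C₂ + 1 := by
    have := (Metric.tendstoUniformlyOn_iff.1 hDt_lim) 1 one_pos
    filter_upwards [this] with r hr x hx
    have h1 : dist (Dt x) (H r x) < 1 := hr x hx
    have : ‖H r x‖ ≤ ‖Dt x‖ + dist (Dt x) (H r x) := by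
      rw [dist_eq_norm]
      calc ‖H r x‖ = ‖Dt x - (Dt x - H r x)‖ := by ring_nf
        _ ≤ ‖Dt x‖ + ‖Dt x - H r x‖ := norm_sub_le _ _
    linarith [hC₂ x hx, this]
  have hsub : Set.uIoc α β ⊆ Icc (0:ℝ) (2 * π) := by
    rw [uIoc_of_le hαβ.le]
    exact fun x hx => ⟨le_of_lt (lt_of_le_of_lt hα hx.1), le_trans hx.2 hβ⟩
  have hT3 : Tendsto (fun r => ∫ θ in α..β, Ψ (Real.tanh (r / 2)) θ * H r θ) atTop
      (𝓝 (∫ θ in α..β, Ψ 1 θ * Dt θ)) := by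
    apply intervalIntegral.tendsto_integral_filter_of_dominated_convergence
      (fun _ => C₁ * (C₂ + 1))
    · exact Eventually.of_forall fun r =>
        (((hΨcont _).mul (hHcont r))).aestronglyMeasurable.restrict
    · filter_upwards [hHbd] with r hr
      refine Eventually.of_forall fun x hx => ?_
      rw [norm_mul]
      have h2 : ‖H r x‖ ≤ C₂ + 1 := hr x (hsub hx)
      exact mul_le_mul (hΨbd r x) h2 (norm_nonneg _) hC₁0
    · exact intervalIntegrable_const
    · refine Eventually.of_forall fun x hx => ?_
      have hx' := hsub hx
      have hΨlim : Tendsto (fun r => Ψ (Real.tanh (r / 2)) x) atTop (𝓝 (Ψ 1 x)) := by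
        have h1 : Tendsto (fun r => ((Real.tanh (r / 2) : ℝ) : ℂ) * Complex.exp (x * Complex.I))
            atTop (𝓝 ((1 : ℂ) * Complex.exp (x * Complex.I))) :=
          hcC.mul_const _
        have h2 := ((hψ'.tendsto _).comp h1).prodMk_nhds (h1.mul_const Complex.I)
        have := (isBoundedBilinearMap_apply.continuous.tendsto _).comp h2
        simpa [hΨ, Function.comp_def] using this
      exact hΨlim.mul (hHpt x hx')
  -- rewrite the target integrand
  have hint_eq : (∫ θ in α..β, deriv (fun θ' : ℝ => ψ (Complex.exp (θ' * Complex.I))) θ * Dt θ) =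
      ∫ θ in α..β, Ψ 1 θ * Dt θ := by
    apply intervalIntegral.integral_congr
    intro x _
    show deriv (fun θ' : ℝ => ψ (Complex.exp (θ' * Complex.I))) x * Dt x = Ψ 1 x * Dt x
    congr 1
    have h := hψcirc 1 x
    simp only [Complex.ofReal_one, one_mul] at h
    have h2 : deriv (fun θ' : ℝ => ψ (Complex.exp (θ' * Complex.I))) x =
        (fderiv ℝ ψ (Complex.exp (x * Complex.I))) (Complex.exp (x * Complex.I) * Complex.I) :=
      h.deriv
    rw [h2, hΨ]
    simp [Complex.ofReal_one, one_mul]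
  rw [hint_eq]
  have := (hT1.sub hT2).sub hT3
  exact this.congr fun r => (key r).symm
end
end

section
/- Fix s ∈ ℂ. Let D̃ : ℝ → ℂ be continuous with D̃(0) = 0 and D̃(θ + 2π) = D̃(θ) + D̃(2π) for all θ; for a C¹ function φ : [a,b] → ℂ set Λ_{[a,b]}(φ) = φ(b)D̃(b) − φ(a)D̃(a) − ∫_a^b φ'(θ)D̃(θ)dθ. Let 0 = θ₀ < θ₁ < ⋯ < θ_q = 2π, and for each k ∈ {1,…,q} let γ_k be a Möbius automorphism of the unit disk with lift γ̃_k : ℝ → ℝ, and assume: (Markov) there exist an integer m_k and indices 0 ≤ a_k < b_k ≤ q with γ̃_k(θ_{k−1}) = θ_{a_k} + 2πm_k and γ̃_k(θ_k) = θ_{b_k} + 2πm_k; (equivariance) for all real a ≤ b with b − a ≤ 2π and all C¹ φ : [a,b] → ℂ, Λ_{[a,b]}(φ) = Λ_{[γ̃_k(a),γ̃_k(b)]}(φ∘γ̃_k^{−1}·(γ̃_k'∘γ̃_k^{−1})^{−s}). Then for every family of C¹ functions φ_k : [θ_{k−1},θ_k] → ℂ (k = 1,…,q): Σ_{l=1}^q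 Λ_{[θ_{l−1},θ_l]}((Lφ)_l) = Σ_{k=1}^q Λ_{[θ_{k−1},θ_k]}(φ_k), where for θ ∈ [θ_{l−1},θ_l], (Lφ)_l(θ) = Σ_{k : a_k < l ≤ b_k} φ_k(γ̃_k^{−1}(θ + 2πm_k))·(γ̃_k'(γ̃_k^{−1}(θ + 2πm_k)))^{−s}. -/
open Complex Real Set Filter MeasureTheory Topology ComplexConjugate

noncomputable section


/-- The integration-by-parts pairing
`Λ_{[a,b]}(φ) = φ(b)D̃(b) − φ(a)D̃(a) − ∫_a^b φ'(θ)D̃(θ)dθ`. -/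
def Lam (Dt : ℝ → ℂ) (a b : ℝ) (φ : ℝ → ℂ) : ℂ :=
  φ b * Dt b - φ a * Dt a - ∫ θ in a..b, derivWithin φ (Set.Icc a b) θ * Dt θ

lemma ae_ne_pt (b : ℝ) : ∀ᵐ x : ℝ, x ≠ b := by
  rw [MeasureTheory.ae_iff]
  have : {x : ℝ | ¬ x ≠ b} = {b} := by ext x; simp
  rw [this]; exact Real.volume_singleton

lemma intCongr {a b : ℝ} (hab : a ≤ b) {f h : ℝ → ℂ}
    (he : ∀ θ ∈ Ioo a b, f θ = h θ) :
    ∫ θ in a..b, f θ = ∫ θ in a..b, h θ := by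
  apply intervalIntegral.integral_congr_ae
  filter_upwards [ae_ne_pt b] with x hx hmem
  rw [Set.uIoc_of_le hab] at hmem
  exact he x ⟨hmem.1, lt_of_le_of_ne hmem.2 hx⟩

lemma Lam_same (Dt : ℝ → ℂ) (a : ℝ) (φ : ℝ → ℂ) : Lam Dt a a φ = 0 := by
  simp [Lam]

lemma contOn_derivWithin {a b : ℝ} (hab : a < b) {χ : ℝ → ℂ}
    (hχ : ContDiffOn ℝ 1 χ (Icc a b)) :
    ContinuousOn (derivWithin χ (Icc a b)) (Icc a b) :=
  hχ.continuousOn_derivWithin (uniqueDiffOn_Icc hab) le_rfl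

lemma ftc {a b : ℝ} (hab : a < b) {χ : ℝ → ℂ}
    (hχ : ContDiffOn ℝ 1 χ (Icc a b)) :
    ∫ θ in a..b, derivWithin χ (Icc a b) θ = χ b - χ a := by
  apply intervalIntegral.integral_eq_sub_of_hasDeriv_right_of_le hab.le hχ.continuousOn
  · intro x hx
    have hmem : Icc a b ∈ 𝓝 x := Icc_mem_nhds hx.1 hx.2
    have hd : DifferentiableWithinAt ℝ χ (Icc a b) x :=
      hχ.differentiableOn one_ne_zero x ⟨hx.1.le, hx.2.le⟩
    exact ((hd.hasDerivWithinAt.hasDerivAt hmem)).hasDerivWithinAt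
  · exact ContinuousOn.intervalIntegrable
      (by rw [Set.uIcc_of_le hab.le]; exact contOn_derivWithin hab hχ)

-- deriv = derivWithin on interior
lemma derivWithin_eq_deriv_Ioo {a b : ℝ} {x : ℝ} (hx : x ∈ Ioo a b) (χ : ℝ → ℂ) :
    derivWithin χ (Icc a b) x = deriv χ x :=
  derivWithin_of_mem_nhds (Icc_mem_nhds hx.1 hx.2)

lemma Lam_sum {Dt : ℝ → ℂ} (hDt : Continuous Dt) {a b : ℝ} (hab : a < b)
    {ι : Type*} (S : Finset ι) (F : ι → ℝ → ℂ)
    (hF : ∀ k ∈ S, ContDiffOn ℝ 1 (F k) (Icc a b)) :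
    Lam Dt a b (fun θ => ∑ k ∈ S, F k θ) = ∑ k ∈ S, Lam Dt a b (F k) := by
  unfold Lam
  have hint : ∫ θ in a..b, derivWithin (fun θ => ∑ k ∈ S, F k θ) (Icc a b) θ * Dt θ
      = ∑ k ∈ S, ∫ θ in a..b, derivWithin (F k) (Icc a b) θ * Dt θ := by
    rw [intCongr hab.le (h := fun θ => ∑ k ∈ S, derivWithin (F k) (Icc a b) θ * Dt θ)]
    · exact intervalIntegral.integral_finset_sum (fun k hk =>
        ContinuousOn.intervalIntegrable (by
          rw [Set.uIcc_of_le hab.le]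
          exact (contOn_derivWithin hab (hF k hk)).mul hDt.continuousOn))
    · intro θ hθ
      have hθ' : θ ∈ Icc a b := ⟨hθ.1.le, hθ.2.le⟩
      rw [derivWithin_fun_sum
        (fun k hk => (hF k hk).differentiableOn one_ne_zero θ hθ'), Finset.sum_mul]
  rw [hint, Finset.sum_mul, Finset.sum_mul, ← Finset.sum_sub_distrib, ← Finset.sum_sub_distrib]

lemma Lam_split {Dt : ℝ → ℂ} (hDt : Continuous Dt) {a b c : ℝ} (hab : a ≤ b) (hbc : b ≤ c)
    {χ : ℝ → ℂ} (hχ : ContDiffOn ℝ 1 χ (Icc a c)) :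
    Lam Dt a c χ = Lam Dt a b χ + Lam Dt b c χ := by
  rcases eq_or_lt_of_le hab with rfl | hab
  · rw [Lam_same]; ring
  rcases eq_or_lt_of_le hbc with rfl | hbc
  · rw [Lam_same]; ring
  have hac : a < c := hab.trans hbc
  have hint : ∫ θ in a..c, derivWithin χ (Icc a c) θ * Dt θ
      = (∫ θ in a..b, derivWithin χ (Icc a b) θ * Dt θ)
        + ∫ θ in b..c, derivWithin χ (Icc b c) θ * Dt θ := by
    have i1 : ∫ θ in a..b, derivWithin χ (Icc a c) θ * Dt θ
        = ∫ θ in a..b, derivWithin χ (Icc a b) θ * Dt θ := by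
      refine intCongr hab.le (fun θ hθ => ?_)
      rw [derivWithin_eq_deriv_Ioo hθ, derivWithin_eq_deriv_Ioo ⟨hθ.1, hθ.2.trans hbc⟩]
    have i2 : ∫ θ in b..c, derivWithin χ (Icc a c) θ * Dt θ
        = ∫ θ in b..c, derivWithin χ (Icc b c) θ * Dt θ := by
      refine intCongr hbc.le (fun θ hθ => ?_)
      rw [derivWithin_eq_deriv_Ioo hθ, derivWithin_eq_deriv_Ioo ⟨hab.trans hθ.1, hθ.2⟩]
    rw [← i1, ← i2]
    refine (intervalIntegral.integral_add_adjacent_intervals ?_ ?_).symm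
    · exact ContinuousOn.intervalIntegrable (by
        rw [Set.uIcc_of_le hab.le]
        exact ((contOn_derivWithin hac hχ).mul hDt.continuousOn).mono
          (Icc_subset_Icc le_rfl hbc.le))
    · exact ContinuousOn.intervalIntegrable (by
        rw [Set.uIcc_of_le hbc.le]
        exact ((contOn_derivWithin hac hχ).mul hDt.continuousOn).mono
          (Icc_subset_Icc hab.le le_rfl))
  unfold Lam
  rw [hint]; ring

lemma Lam_shift {Dt : ℝ → ℂ} (hDt : Continuous Dt) {a b c : ℝ} (hab : a < b) {K : ℂ}
    (hshift : ∀ θ : ℝ, Dt (θ + c) = Dt θ + K)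
    {χ : ℝ → ℂ} (hχ : ContDiffOn ℝ 1 χ (Icc (a+c) (b+c))) :
    Lam Dt a b (fun θ => χ (θ + c)) = Lam Dt (a+c) (b+c) χ := by
  have habc : a + c < b + c := by linarith
  have hDt' : ∀ θ : ℝ, Dt θ = Dt (θ + c) - K := fun θ => by rw [hshift]; ring
  have hcd := contOn_derivWithin habc hχ
  have hint1 : ∫ θ in a..b, derivWithin (fun θ => χ (θ + c)) (Icc a b) θ * Dt θ
      = ∫ θ in a..b, (fun u => deriv χ u * (Dt u - K)) (θ + c) := by
    refine intCongr hab.le (fun θ hθ => ?_)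
    simp only
    rw [derivWithin_eq_deriv_Ioo hθ, deriv_comp_add_const, ← hDt' θ]
  have hint2 : ∫ θ in (a+c)..(b+c), deriv χ θ * (Dt θ - K)
      = ∫ θ in (a+c)..(b+c), (derivWithin χ (Icc (a+c) (b+c)) θ * Dt θ
          - derivWithin χ (Icc (a+c) (b+c)) θ * K) := by
    refine intCongr habc.le (fun θ hθ => ?_)
    rw [← derivWithin_eq_deriv_Ioo hθ]; ring
  have hi1 : IntervalIntegrable (fun θ => derivWithin χ (Icc (a+c) (b+c)) θ * Dt θ)
      volume (a+c) (b+c) := ContinuousOn.intervalIntegrable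
    (by rw [Set.uIcc_of_le habc.le]; exact hcd.mul hDt.continuousOn)
  have hi2 : IntervalIntegrable (fun θ => derivWithin χ (Icc (a+c) (b+c)) θ * K)
      volume (a+c) (b+c) := ContinuousOn.intervalIntegrable
    (by rw [Set.uIcc_of_le habc.le]; exact hcd.mul continuousOn_const)
  have hftc := ftc habc hχ
  unfold Lam
  have h3 : (∫ θ in a..b, (fun u => deriv χ u * (Dt u - K)) (θ + c))
      = ∫ θ in (a+c)..(b+c), deriv χ θ * (Dt θ - K) :=
    intervalIntegral.integral_comp_add_right (fun u => deriv χ u * (Dt u - K)) c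
  rw [hint1, h3, hint2,
    intervalIntegral.integral_sub hi1 hi2, intervalIntegral.integral_mul_const, hftc,
    hshift a, hshift b]
  ring


lemma branch_den_ne (Aa Bb : ℂ) (hAB : ‖Aa‖ ^ 2 - ‖Bb‖ ^ 2 = 1)
    (θ : ℝ) : conj Bb * Complex.exp (θ * Complex.I) + conj Aa ≠ 0 := by
  intro h
  have hE : ‖Complex.exp (θ * Complex.I)‖ = 1 := by
    rw [Complex.norm_exp]
    simp
  have h1 : conj Aa = -(conj Bb * Complex.exp (θ * Complex.I)) := by
    linear_combination h
  have h2 := congrArg (‖·‖) h1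
  simp [map_mul, hE] at h2
  nlinarith [norm_nonneg Aa, norm_nonneg Bb]

lemma branch_hasDerivAt (Aa Bb : ℂ) (hAB : ‖Aa‖ ^ 2 - ‖Bb‖ ^ 2 = 1)
    (g : ℝ → ℝ) (hg_cont : Continuous g)
    (hg_lift : ∀ θ : ℝ, Complex.exp (g θ * Complex.I)
      = (Aa * Complex.exp (θ * Complex.I) + Bb) /
        (conj Bb * Complex.exp (θ * Complex.I) + conj Aa)) :
    ∀ θ : ℝ, HasDerivAt g
      ((Complex.normSq (conj Bb * Complex.exp (θ * Complex.I) + conj Aa))⁻¹) θ := by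
  set E : ℝ → ℂ := fun θ => Complex.exp (θ * Complex.I) with hE_def
  set den : ℝ → ℂ := fun θ => conj Bb * E θ + conj Aa with hden_def
  set N : ℝ → ℂ := fun θ => Aa * E θ + Bb with hN_def
  set uu : ℝ → ℝ := fun θ => (Complex.normSq (den θ))⁻¹ with huu_def
  have hden_ne : ∀ θ, den θ ≠ 0 := branch_den_ne Aa Bb hAB
  have hnsq_ne : ∀ θ, (Complex.normSq (den θ) : ℂ) ≠ 0 := by
    intro θ
    simpa using (Complex.normSq_pos.mpr (hden_ne θ)).ne'
  -- derivative of E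
  have hE' : ∀ θ : ℝ, HasDerivAt E (E θ * Complex.I) θ := by
    intro θ
    have h1 : HasDerivAt (fun t : ℝ => (t : ℂ) * Complex.I) Complex.I θ := by
      simpa using (Complex.ofRealCLM.hasDerivAt (x := θ)).mul_const Complex.I
    simpa using h1.cexp
  have hE_abs : ∀ θ, E θ * conj (E θ) = 1 := by
    intro θ
    rw [← Complex.exp_conj]
    simp only [map_mul, Complex.conj_I, Complex.conj_ofReal]
    rw [← Complex.exp_add]
    ring_nf
    exact Complex.exp_zero
  have hkey2 : ∀ θ, E θ * conj (den θ) = N θ := by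
    intro θ
    calc E θ * conj (den θ) = Bb * (E θ * conj (E θ)) + Aa * E θ := by
          simp only [hden_def, map_add, map_mul, Complex.conj_conj]; ring
      _ = N θ := by rw [hE_abs θ]; simp only [hN_def]; ring
  have hkey1 : ∀ θ, Aa * den θ - conj Bb * N θ = 1 := by
    intro θ
    have h1 : Aa * conj Aa - conj Bb * Bb = 1 := by
      rw [mul_comm (conj Bb) Bb, Complex.mul_conj, Complex.mul_conj, ← Complex.ofReal_sub,
        ← Complex.sq_norm, ← Complex.sq_norm, hAB, Complex.ofReal_one]
    simp only [hden_def, hN_def]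
    linear_combination h1
  -- continuity facts
  have hE_cont : Continuous E := Complex.continuous_exp.comp
    (Complex.continuous_ofReal.mul continuous_const)
  have hden_cont : Continuous den := (continuous_const.mul hE_cont).add continuous_const
  have hu_cont : Continuous uu := (Complex.continuous_normSq.comp hden_cont).inv₀
    (fun θ => (Complex.normSq_pos.mpr (hden_ne θ)).ne')
  -- derivative of f = N/den
  have hf' : ∀ θ : ℝ, HasDerivAt (fun θ => N θ / den θ)
      (Complex.I * (uu θ : ℂ) * (N θ / den θ)) θ := by
    intro θ
    have hN' : HasDerivAt N (Aa * (E θ * Complex.I)) θ :=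
      ((hE' θ).const_mul Aa).add_const Bb
    have hden' : HasDerivAt den (conj Bb * (E θ * Complex.I)) θ :=
      ((hE' θ).const_mul (conj Bb)).add_const (conj Aa)
    have hraw := hN'.div hden' (hden_ne θ)
    refine hraw.congr_deriv ?_
    symm
    have hnum : Aa * (E θ * Complex.I) * den θ - N θ * (conj Bb * (E θ * Complex.I))
        = E θ * Complex.I := by linear_combination (E θ * Complex.I) * hkey1 θ
    rw [hnum]
    have hcden_ne : conj (den θ) ≠ 0 := by
      simpa using (hden_ne θ)
    have huu : ((uu θ : ℝ) : ℂ) = (den θ * conj (den θ))⁻¹ := by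
      rw [huu_def]
      push_cast
      rw [Complex.mul_conj]
    rw [huu, ← hkey2 θ]
    have halg : ∀ (d cd e : ℂ), d ≠ 0 → cd ≠ 0 →
        Complex.I * (d * cd)⁻¹ * (e * cd / d) = e * Complex.I / d ^ 2 := by
      intro d cd e hd hcd; field_simp
    exact halg _ _ _ (hden_ne θ) hcden_ne
  -- the primitive G of uu
  set G : ℝ → ℝ := fun θ => g 0 + ∫ t in (0:ℝ)..θ, uu t with hG_def
  have hG' : ∀ θ : ℝ, HasDerivAt G (uu θ) θ := by
    intro θ
    exact (intervalIntegral.integral_hasDerivAt_right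
      (hu_cont.intervalIntegrable 0 θ)
      (hu_cont.stronglyMeasurableAtFilter volume (𝓝 θ))
      hu_cont.continuousAt).const_add (g 0)
  have hGdiff : Differentiable ℝ G := fun θ => (hG' θ).differentiableAt
  have hG_cont : Continuous G := hGdiff.continuous
  -- H = exp(-G i) * f is constant
  set H : ℝ → ℂ := fun θ => Complex.exp (-((G θ : ℝ) : ℂ) * Complex.I) * (N θ / den θ)
    with hH_def
  have hH' : ∀ θ, HasDerivAt H 0 θ := by
    intro θ
    have h1 : HasDerivAt (fun θ : ℝ => -((G θ : ℝ) : ℂ) * Complex.I)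
        (-((uu θ : ℝ) : ℂ) * Complex.I) θ := ((hG' θ).ofReal_comp.neg).mul_const Complex.I
    have h3 := h1.cexp.mul (hf' θ)
    refine h3.congr_deriv ?_
    ring
  have hHconst : ∀ θ, H θ = H 0 := fun θ =>
    is_const_of_deriv_eq_zero (fun x => (hH' x).differentiableAt)
      (fun x => (hH' x).deriv) θ 0
  have hG0 : G 0 = g 0 := by simp [hG_def]
  have hfg : ∀ θ, N θ / den θ = Complex.exp ((g θ : ℝ) * Complex.I) :=
    fun θ => (hg_lift θ).symm
  have hH0 : H 0 = 1 := by
    rw [hH_def]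
    simp only
    rw [hfg 0, hG0, ← Complex.exp_add]
    ring_nf
    exact Complex.exp_zero
  have hexp1 : ∀ θ, Complex.exp (((g θ - G θ : ℝ) : ℂ) * Complex.I) = 1 := by
    intro θ
    have h := (hHconst θ).trans hH0
    rw [hH_def] at h
    simp only at h
    rw [hfg θ, ← Complex.exp_add] at h
    convert h using 2
    push_cast
    ring
  have hint : ∀ θ, ∃ n : ℤ, g θ - G θ = 2 * π * n := by
    intro θ
    obtain ⟨n, hn⟩ := Complex.exp_eq_one_iff.mp (hexp1 θ)
    refine ⟨n, ?_⟩
    have h2 : ((g θ - G θ : ℝ) : ℂ) = ((2 * π * (n : ℝ) : ℝ) : ℂ) := by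
      apply mul_right_cancel₀ Complex.I_ne_zero
      rw [hn]
      push_cast
      ring
    exact_mod_cast h2
  have hj0 : g 0 - G 0 = 0 := by rw [hG0]; ring
  have hS : {θ : ℝ | g θ - G θ = 0} = Set.univ := by
    refine IsClopen.eq_univ (s := {θ : ℝ | g θ - G θ = 0}) ?_ ⟨0, hj0⟩
    constructor
    · exact isClosed_eq (hg_cont.sub hG_cont) continuous_const
    · have hSeq : {θ : ℝ | g θ - G θ = 0}
          = (fun θ => g θ - G θ) ⁻¹' (Metric.ball (0:ℝ) π) := by
        ext θ
        simp only [mem_setOf_eq, mem_preimage, Metric.mem_ball, Real.dist_eq, sub_zero]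
        constructor
        · intro h; rw [h]; simpa using Real.pi_pos
        · intro h
          obtain ⟨n, hn⟩ := hint θ
          rw [hn] at h ⊢
          have hn0 : n = 0 := by
            by_contra hne
            have h1 : (1:ℝ) ≤ |(n:ℝ)| := by exact_mod_cast Int.one_le_abs hne
            rw [abs_mul, abs_mul] at h
            have hπ : |π| = π := abs_of_pos Real.pi_pos
            rw [hπ] at h
            have habs2 : |(2:ℝ)| = 2 := by norm_num
            rw [habs2] at h
            nlinarith [Real.pi_pos]
          simp [hn0]
      rw [hSeq]
      exact Metric.isOpen_ball.preimage (hg_cont.sub hG_cont)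
  have hgG : g = G := funext fun t => by
    have := Set.eq_univ_iff_forall.mp hS t
    simp only [mem_setOf_eq] at this
    linarith
  intro θ
  rw [hgG]
  exact hG' θ

lemma branch_reg (Aa Bb : ℂ) (hAB : ‖Aa‖ ^ 2 - ‖Bb‖ ^ 2 = 1)
    (g : ℝ → ℝ) (hg_cont : Continuous g) (hg_mono : StrictMono g)
    (hg_lift : ∀ θ : ℝ, Complex.exp (g θ * Complex.I)
      = (Aa * Complex.exp (θ * Complex.I) + Bb) /
        (conj Bb * Complex.exp (θ * Complex.I) + conj Aa))
    (δ : ℝ → ℝ) (hδ : ∀ θ : ℝ, g (δ θ) = θ ∧ δ (g θ) = θ) (s : ℂ) :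
    StrictMono δ ∧ ContDiff ℝ 1 δ ∧
      ContDiff ℝ 1 (fun θ : ℝ => ((deriv g (δ θ) : ℝ) : ℂ) ^ (-s)) := by
  set E : ℝ → ℂ := fun θ => Complex.exp (θ * Complex.I) with hE_def
  set den : ℝ → ℂ := fun θ => conj Bb * E θ + conj Aa with hden_def
  set uu : ℝ → ℝ := fun θ => (Complex.normSq (den θ))⁻¹ with huu_def
  have hden_ne : ∀ θ, den θ ≠ 0 := branch_den_ne Aa Bb hAB
  have hu' : ∀ θ, HasDerivAt g (uu θ) θ :=
    branch_hasDerivAt Aa Bb hAB g hg_cont hg_lift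
  have hderiv : deriv g = uu := funext fun θ => (hu' θ).deriv
  have hu_pos : ∀ θ, 0 < uu θ := fun θ =>
    inv_pos.mpr (Complex.normSq_pos.mpr (hden_ne θ))
  have hE_cd : ContDiff ℝ 1 E := Complex.contDiff_exp.comp
    (Complex.ofRealCLM.contDiff.mul contDiff_const)
  have hden_cd : ContDiff ℝ 1 den := (contDiff_const.mul hE_cd).add contDiff_const
  have hnsq_cd : ContDiff ℝ 1 (fun θ => Complex.normSq (den θ)) := by
    have heq : (fun θ => Complex.normSq (den θ))
        = fun θ => (den θ).re * (den θ).re + (den θ).im * (den θ).im :=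
      funext fun θ => Complex.normSq_apply _
    rw [heq]
    exact ((Complex.reCLM.contDiff.comp hden_cd).mul
        (Complex.reCLM.contDiff.comp hden_cd)).add
      ((Complex.imCLM.contDiff.comp hden_cd).mul (Complex.imCLM.contDiff.comp hden_cd))
  have hu_cd : ContDiff ℝ 1 uu :=
    hnsq_cd.inv (fun θ => (Complex.normSq_pos.mpr (hden_ne θ)).ne')
  have hu_cont : Continuous uu := hu_cd.continuous
  -- monotonicity of δ
  have hδ_mono : StrictMono δ := by
    intro x y hxy
    by_contra hle
    push_neg at hle
    have := hg_mono.monotone hle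
    rw [(hδ x).1, (hδ y).1] at this
    exact absurd hxy (not_lt.mpr this)
  -- continuity of δ
  have hδ_cont : Continuous δ := by
    have hsurj : Function.Surjective g := fun y => ⟨δ y, (hδ y).1⟩
    set e := StrictMono.orderIsoOfSurjective g hg_mono hsurj with he_def
    have hδe : δ = fun y => e.symm y := by
      funext y
      apply hg_mono.injective
      rw [(hδ y).1]
      have : e (e.symm y) = y := e.apply_symm_apply y
      exact this.symm
    rw [hδe]
    exact (OrderIso.continuous e.symm)
  have hδ' : ∀ y, HasDerivAt δ ((uu (δ y))⁻¹) y := by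
    intro y
    exact HasDerivAt.of_local_left_inverse hδ_cont.continuousAt (hu' (δ y))
      (hu_pos (δ y)).ne' (Filter.Eventually.of_forall fun t => (hδ t).1)
  have hδ_cd : ContDiff ℝ 1 δ := by
    rw [contDiff_one_iff_deriv]
    constructor
    · exact fun y => (hδ' y).differentiableAt
    · have : deriv δ = fun y => (uu (δ y))⁻¹ := funext fun y => (hδ' y).deriv
      rw [this]
      exact (hu_cont.comp hδ_cont).inv₀ fun y => (hu_pos _).ne'
  refine ⟨hδ_mono, hδ_cd, ?_⟩
  -- the power factor
  have hpow_eq : (fun θ : ℝ => ((deriv g (δ θ) : ℝ) : ℂ) ^ (-s))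
      = fun θ : ℝ => Complex.exp ((Real.log (uu (δ θ)) : ℂ) * (-s)) := by
    funext θ
    rw [hderiv]
    have hx : (0:ℝ) < uu (δ θ) := hu_pos _
    rw [Complex.cpow_def_of_ne_zero (by exact_mod_cast hx.ne'), Complex.ofReal_log hx.le]
  rw [hpow_eq]
  have huδ : ContDiff ℝ 1 (fun θ => uu (δ θ)) := hu_cd.comp hδ_cd
  have hlog : ContDiff ℝ 1 (fun θ => Real.log (uu (δ θ))) := by
    rw [contDiff_iff_contDiffAt]
    intro θ
    exact (Real.contDiffAt_log.mpr (hu_pos (δ θ)).ne').comp θ huδ.contDiffAt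
  exact Complex.contDiff_exp.comp ((Complex.ofRealCLM.contDiff.comp hlog).mul contDiff_const)

lemma branch_deriv_pos (Aa Bb : ℂ) (hAB : ‖Aa‖ ^ 2 - ‖Bb‖ ^ 2 = 1)
    (g : ℝ → ℝ) (hg_cont : Continuous g)
    (hg_lift : ∀ θ : ℝ, Complex.exp (g θ * Complex.I)
      = (Aa * Complex.exp (θ * Complex.I) + Bb) /
        (conj Bb * Complex.exp (θ * Complex.I) + conj Aa)) :
    ∀ θ : ℝ, 0 < deriv g θ := by
  intro θ
  have hu' := branch_hasDerivAt Aa Bb hAB g hg_cont hg_lift θ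
  rw [hu'.deriv]
  exact inv_pos.mpr (Complex.normSq_pos.mpr (branch_den_ne Aa Bb hAB θ))

/-- Proposition 4 of the paper: a continuous primitive `D̃` that is `s`-equivariant under each
Möbius branch of a piecewise Möbius Markov map of the circle is a fixed point of the dual
Ruelle transfer operator: `⟨D, Lφ⟩ = ⟨D, φ⟩`. -/
theorem stmt6 (s : ℂ)
    (Dt : ℝ → ℂ) (hDt_cont : Continuous Dt) (hDt_zero : Dt 0 = 0)
    (hDt_ext : ∀ θ : ℝ, Dt (θ + 2 * π) = Dt θ + Dt (2 * π))
    -- the Markov partition 0 = θ₀ < θ₁ < ⋯ < θ_q = 2π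
    (q : ℕ) (hq : 0 < q)
    (P : Fin (q + 1) → ℝ) (hP_mono : StrictMono P)
    (hP0 : P 0 = 0) (hPlast : P (Fin.last q) = 2 * π)
    -- the Möbius branches γ_k with lifts `g k` and inverse lifts `δ k`
    (A B : Fin q → ℂ) (hAB : ∀ k, ‖A k‖ ^ 2 - ‖B k‖ ^ 2 = 1)
    (g : Fin q → ℝ → ℝ)
    (hg_cont : ∀ k, Continuous (g k)) (hg_mono : ∀ k, StrictMono (g k))
    (hg_lift : ∀ k (θ : ℝ), Complex.exp (g k θ * Complex.I)
      = (A k * Complex.exp (θ * Complex.I) + B k) /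
        (conj (B k) * Complex.exp (θ * Complex.I) + conj (A k)))
    (hg_per : ∀ k (θ : ℝ), g k (θ + 2 * π) = g k θ + 2 * π)
    (δ : Fin q → ℝ → ℝ) (hδ : ∀ k (θ : ℝ), g k (δ k θ) = θ ∧ δ k (g k θ) = θ)
    -- the Markov property: each branch sends partition points to partition points mod 2π
    (m : Fin q → ℤ) (aIdx bIdx : Fin q → Fin (q + 1)) (hIdx : ∀ k, aIdx k < bIdx k)
    (hMarkov_a : ∀ k, g k (P k.castSucc) = P (aIdx k) + 2 * π * (m k : ℝ))
    (hMarkov_b : ∀ k, g k (P k.succ) = P (bIdx k) + 2 * π * (m k : ℝ))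
    -- the equivariance of `D̃` under each branch (furnished by Proposition 3)
    (heqv : ∀ k, ∀ a b : ℝ, a ≤ b → b - a ≤ 2 * π →
      ∀ φ : ℝ → ℂ, ContDiffOn ℝ 1 φ (Set.Icc a b) →
        Lam Dt a b φ = Lam Dt (g k a) (g k b)
          (fun θ => φ (δ k θ) * ((deriv (g k) (δ k θ) : ℝ) : ℂ) ^ (-s))) :
    -- conclusion: ⟨D̃, Lφ⟩ = ⟨D̃, φ⟩ for every piecewise C¹ family φ
    ∀ φ : Fin q → ℝ → ℂ,
      (∀ k, ContDiffOn ℝ 1 (φ k) (Set.Icc (P k.castSucc) (P k.succ))) →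
      ∀ Lφ : Fin q → ℝ → ℂ,
        (∀ l (θ : ℝ), Lφ l θ =
          ∑ k ∈ Finset.univ.filter (fun k : Fin q => aIdx k ≤ l.castSucc ∧ l.succ ≤ bIdx k),
            φ k (δ k (θ + 2 * π * (m k : ℝ))) *
              ((deriv (g k) (δ k (θ + 2 * π * (m k : ℝ))) : ℝ) : ℂ) ^ (-s)) →
        ∑ l : Fin q, Lam Dt (P l.castSucc) (P l.succ) (Lφ l)
          = ∑ k : Fin q, Lam Dt (P k.castSucc) (P k.succ) (φ k) := by
  intro φ hφ Lφ hLφ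
  -- Dt shifts by integer multiples of 2π
  have hDtZ : ∀ (n : ℤ) (θ : ℝ), Dt (θ + 2*π*(n:ℝ)) = Dt θ + (n:ℂ) * Dt (2*π) := by
    intro n
    induction n using Int.induction_on with
    | zero => intro θ; simp
    | succ i ih =>
      intro θ
      have h1 : θ + 2*π*(((i:ℤ)+1 : ℤ):ℝ) = (θ + 2*π*((i:ℤ):ℝ)) + 2*π := by push_cast; ring
      rw [h1, hDt_ext, ih]
      push_cast; ring
    | pred i ih =>
      intro θ
      have h1 : θ + 2*π*((-(i:ℤ)-1 : ℤ):ℝ) = (θ + 2*π*((-(i:ℤ) : ℤ):ℝ)) - 2*π := by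
        push_cast; ring
      have h2 : Dt ((θ + 2*π*((-(i:ℤ):ℤ):ℝ)) - 2*π)
          = Dt (θ + 2*π*((-(i:ℤ):ℤ):ℝ)) - Dt (2*π) := by
        have h3 := hDt_ext ((θ + 2*π*((-(i:ℤ):ℤ):ℝ)) - 2*π)
        rw [sub_add_cancel] at h3
        linear_combination -h3
      rw [h1, h2, ih]
      push_cast; ring
  -- partition facts
  have hP_lt : ∀ k : Fin q, P k.castSucc < P k.succ := fun k => hP_mono (Fin.castSucc_lt_succ (i := k))
  have hP_le : ∀ k : Fin q, P k.castSucc ≤ P k.succ := fun k => (hP_lt k).le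
  -- regularity of each branch
  have hreg := fun k => branch_reg (A k) (B k) (hAB k) (g k) (hg_cont k) (hg_mono k)
    (hg_lift k) (δ k) (hδ k) s
  -- the transported test functions χ k and their smoothness
  have hχC1 : ∀ k : Fin q, ContDiffOn ℝ 1
      (fun t => φ k (δ k t) * ((deriv (g k) (δ k t) : ℝ) : ℂ) ^ (-s))
      (Icc (g k (P k.castSucc)) (g k (P k.succ))) := by
    intro k
    obtain ⟨hδm, hδcd, hpow⟩ := hreg k
    have hmaps : MapsTo (δ k) (Icc (g k (P k.castSucc)) (g k (P k.succ)))
        (Icc (P k.castSucc) (P k.succ)) := by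
      intro y hy
      constructor
      · have h := hδm.monotone hy.1
        rwa [(hδ k _).2] at h
      · have h := hδm.monotone hy.2
        rwa [(hδ k _).2] at h
    exact (ContDiffOn.comp (hφ k) hδcd.contDiffOn hmaps).mul hpow.contDiffOn
  -- shifted versions are C¹ on the subintervals
  have hIccSub : ∀ (k : Fin q) (x y : Fin (q+1)), aIdx k ≤ x → y ≤ bIdx k →
      Icc (P x + 2*π*(m k : ℝ)) (P y + 2*π*(m k : ℝ))
        ⊆ Icc (g k (P k.castSucc)) (g k (P k.succ)) := by
    intro k x y hx hy
    rw [hMarkov_a k, hMarkov_b k]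
    exact Icc_subset_Icc (add_le_add_left (hP_mono.monotone hx) _)
      (add_le_add_left (hP_mono.monotone hy) _)
  have hψC1 : ∀ (k l : Fin q), aIdx k ≤ l.castSucc → l.succ ≤ bIdx k →
      ContDiffOn ℝ 1
        (fun θ => φ k (δ k (θ + 2*π*(m k : ℝ))) *
          ((deriv (g k) (δ k (θ + 2*π*(m k : ℝ))) : ℝ) : ℂ) ^ (-s))
        (Icc (P l.castSucc) (P l.succ)) := by
    intro k l h1 h2
    have hmaps : MapsTo (fun θ => θ + 2*π*(m k : ℝ)) (Icc (P l.castSucc) (P l.succ))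
        (Icc (g k (P k.castSucc)) (g k (P k.succ))) := by
      intro θ hθ
      refine hIccSub k l.castSucc l.succ h1 h2 ?_
      exact ⟨add_le_add_left hθ.1 _, add_le_add_left hθ.2 _⟩
    exact ContDiffOn.comp (hχC1 k) ((contDiff_id.add contDiff_const).contDiffOn) hmaps
  -- step 1: expand each Lam of Lφ into a sum
  have step1 : ∀ l : Fin q, Lam Dt (P l.castSucc) (P l.succ) (Lφ l)
      = ∑ k ∈ Finset.univ.filter (fun k : Fin q => aIdx k ≤ l.castSucc ∧ l.succ ≤ bIdx k),
          Lam Dt (P l.castSucc) (P l.succ)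
            (fun θ => φ k (δ k (θ + 2*π*(m k : ℝ))) *
              ((deriv (g k) (δ k (θ + 2*π*(m k : ℝ))) : ℝ) : ℂ) ^ (-s)) := by
    intro l
    have hfun : Lφ l = fun θ =>
        ∑ k ∈ Finset.univ.filter (fun k : Fin q => aIdx k ≤ l.castSucc ∧ l.succ ≤ bIdx k),
          φ k (δ k (θ + 2*π*(m k : ℝ))) *
            ((deriv (g k) (δ k (θ + 2*π*(m k : ℝ))) : ℝ) : ℂ) ^ (-s) :=
      funext fun θ => hLφ l θ
    rw [hfun]
    exact Lam_sum hDt_cont (hP_lt l) _ _ (fun k hk => by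
      obtain ⟨h1, h2⟩ := (Finset.mem_filter.mp hk).2
      exact hψC1 k l h1 h2)
  -- extended partition
  have hPN_aux : ∀ n : ℕ, min n q < q + 1 := fun n => Nat.lt_succ_of_le (min_le_right n q)
  set PN : ℕ → ℝ := fun n => P ⟨min n q, hPN_aux n⟩ with hPN_def
  have hPN : ∀ i : Fin (q+1), PN i.val = P i := by
    intro i
    have : (⟨min i.val q, hPN_aux i.val⟩ : Fin (q+1)) = i := by
      apply Fin.ext
      simp [Nat.min_eq_left (Nat.le_of_lt_succ i.isLt)]
    rw [hPN_def]
    simp only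
    rw [this]
  have hPN_mono : Monotone PN := by
    intro x y hxy
    exact hP_mono.monotone (by simp only [Fin.mk_le_mk]; exact min_le_min_right q hxy)
  -- telescoping
  have tele : ∀ (c : ℝ) (χ : ℝ → ℂ) (j i : ℕ), i ≤ j → j ≤ q →
      ContDiffOn ℝ 1 χ (Icc (PN i + c) (PN j + c)) →
      ∑ n ∈ Finset.Ico i j, Lam Dt (PN n + c) (PN (n+1) + c) χ
        = Lam Dt (PN i + c) (PN j + c) χ := by
    intro c χ j
    induction j with
    | zero =>
      intro i hij _ _
      obtain rfl : i = 0 := Nat.le_zero.mp hij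
      simp [Lam_same]
    | succ j ih =>
      intro i hij hjq hχ
      rcases Nat.lt_or_ge i (j+1) with hlt | hge
      · have hij' : i ≤ j := Nat.lt_succ_iff.mp hlt
        rw [Finset.sum_Ico_succ_top hij']
        have hsub : Icc (PN i + c) (PN j + c) ⊆ Icc (PN i + c) (PN (j+1) + c) :=
          Icc_subset_Icc le_rfl (add_le_add_left (hPN_mono (Nat.le_succ j)) c)
        rw [ih i hij' (Nat.le_of_succ_le hjq) (hχ.mono hsub)]
        exact (Lam_split hDt_cont (add_le_add_left (hPN_mono hij') c)
          (add_le_add_left (hPN_mono (Nat.le_succ j)) c) hχ).symm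
      · obtain rfl : i = j + 1 := le_antisymm hij hge
        simp [Lam_same]
  -- sum over the Fin filter as a sum over Ico
  have hfin : ∀ (k : Fin q) (F : ℕ → ℂ),
      ∑ l ∈ Finset.univ.filter (fun l : Fin q => aIdx k ≤ l.castSucc ∧ l.succ ≤ bIdx k),
        F l.val
      = ∑ n ∈ Finset.Ico (aIdx k).val (bIdx k).val, F n := by
    intro k F
    rw [Finset.sum_filter]
    have h1 : ∀ l : Fin q,
        (if (aIdx k ≤ l.castSucc ∧ l.succ ≤ bIdx k) then F l.val else 0)
        = (fun n : ℕ => if n ∈ Finset.Ico (aIdx k).val (bIdx k).val then F n else 0) l.val := by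
      intro l
      simp only [Finset.mem_Ico, Fin.le_def, Fin.coe_castSucc, Fin.val_succ,
        Nat.lt_iff_add_one_le]
    rw [Finset.sum_congr rfl (fun l _ => h1 l),
      Fin.sum_univ_eq_sum_range (fun n : ℕ => if n ∈ Finset.Ico (aIdx k).val (bIdx k).val then F n else 0),
      Finset.sum_ite_mem]
    congr 1
    refine Finset.inter_eq_right.mpr (fun n hn => ?_)
    rw [Finset.mem_range]
    exact lt_of_lt_of_le (Finset.mem_Ico.mp hn).2 (Fin.is_le (bIdx k))
  -- the per-branch chain
  have hk_chain : ∀ k : Fin q,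
      ∑ l ∈ Finset.univ.filter (fun l : Fin q => aIdx k ≤ l.castSucc ∧ l.succ ≤ bIdx k),
        Lam Dt (P l.castSucc) (P l.succ)
          (fun θ => φ k (δ k (θ + 2*π*(m k : ℝ))) *
            ((deriv (g k) (δ k (θ + 2*π*(m k : ℝ))) : ℝ) : ℂ) ^ (-s))
      = Lam Dt (P k.castSucc) (P k.succ) (φ k) := by
    intro k
    have hterm : ∀ l : Fin q, aIdx k ≤ l.castSucc → l.succ ≤ bIdx k →
        Lam Dt (P l.castSucc) (P l.succ)
          (fun θ => φ k (δ k (θ + 2*π*(m k : ℝ))) *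
            ((deriv (g k) (δ k (θ + 2*π*(m k : ℝ))) : ℝ) : ℂ) ^ (-s))
        = (fun n : ℕ => Lam Dt (PN n + 2*π*(m k : ℝ)) (PN (n+1) + 2*π*(m k : ℝ))
            (fun t => φ k (δ k t) * ((deriv (g k) (δ k t) : ℝ) : ℂ) ^ (-s))) l.val := by
      intro l h1 h2
      have e1 : PN l.val = P l.castSucc := by
        have := hPN l.castSucc
        rwa [Fin.coe_castSucc] at this
      have e2 : PN (l.val + 1) = P l.succ := by
        have := hPN l.succ
        rwa [Fin.val_succ] at this
      simp only
      rw [e1, e2]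
      exact Lam_shift hDt_cont (hP_lt l) (hDtZ (m k))
        ((hχC1 k).mono (hIccSub k l.castSucc l.succ h1 h2))
    rw [Finset.sum_congr rfl (fun l hl => by
        obtain ⟨h1, h2⟩ := (Finset.mem_filter.mp hl).2
        exact hterm l h1 h2)]
    refine Eq.trans (hfin k (fun n : ℕ => Lam Dt (PN n + 2*π*(m k : ℝ))
      (PN (n+1) + 2*π*(m k : ℝ))
      (fun t => φ k (δ k t) * ((deriv (g k) (δ k t) : ℝ) : ℂ) ^ (-s)))) ?_
    have hij : (aIdx k).val ≤ (bIdx k).val := (Fin.le_def.mp (hIdx k).le)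
    have hχ' : ContDiffOn ℝ 1
        (fun t => φ k (δ k t) * ((deriv (g k) (δ k t) : ℝ) : ℂ) ^ (-s))
        (Icc (PN (aIdx k).val + 2*π*(m k : ℝ)) (PN (bIdx k).val + 2*π*(m k : ℝ))) := by
      rw [hPN (aIdx k), hPN (bIdx k)]
      exact (hχC1 k).mono (hIccSub k (aIdx k) (bIdx k) le_rfl le_rfl)
    rw [tele (2*π*(m k : ℝ)) _ (bIdx k).val (aIdx k).val hij (Fin.is_le (bIdx k)) hχ']
    rw [hPN (aIdx k), hPN (bIdx k), ← hMarkov_a k, ← hMarkov_b k]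
    have hle2 : P k.succ - P k.castSucc ≤ 2*π := by
      have hlo : 0 ≤ P k.castSucc := by
        have := hP_mono.monotone (Fin.zero_le k.castSucc)
        rw [hP0] at this
        linarith
      have hhi : P k.succ ≤ 2*π := by
        have := hP_mono.monotone (Fin.le_last k.succ)
        rw [hPlast] at this
        linarith
      linarith
    exact (heqv k (P k.castSucc) (P k.succ) (hP_le k) hle2 (φ k) (hφ k)).symm
  -- assemble
  calc ∑ l : Fin q, Lam Dt (P l.castSucc) (P l.succ) (Lφ l)
      = ∑ l : Fin q, ∑ k ∈ Finset.univ.filter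
          (fun k : Fin q => aIdx k ≤ l.castSucc ∧ l.succ ≤ bIdx k),
          Lam Dt (P l.castSucc) (P l.succ)
            (fun θ => φ k (δ k (θ + 2*π*(m k : ℝ))) *
              ((deriv (g k) (δ k (θ + 2*π*(m k : ℝ))) : ℝ) : ℂ) ^ (-s)) :=
        Finset.sum_congr rfl (fun l _ => step1 l)
    _ = ∑ k : Fin q, ∑ l ∈ Finset.univ.filter
          (fun l : Fin q => aIdx k ≤ l.castSucc ∧ l.succ ≤ bIdx k),
          Lam Dt (P l.castSucc) (P l.succ)
            (fun θ => φ k (δ k (θ + 2*π*(m k : ℝ))) *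
              ((deriv (g k) (δ k (θ + 2*π*(m k : ℝ))) : ℝ) : ℂ) ^ (-s)) := by
        simp only [Finset.sum_filter]
        exact Finset.sum_comm
    _ = ∑ k : Fin q, Lam Dt (P k.castSucc) (P k.succ) (φ k) :=
        Finset.sum_congr rfl (fun k _ => hk_chain k)
end
end

section
/- Let ξ and η be distinct points of the unit circle in ℂ, and let m(z) = (az + b)/(b̄z + ā), with a, b ∈ ℂ and |a|² − |b|² = 1, be a Möbius automorphism of the unit disk whose boundary extension satisfies m(1) = ξ and m(−1) = η. Then for every x ∈ (−1,1), writing z = m(x): (|z − ξ|²·|z − η|²)/(1 − |z|²)² = |ξ − η|²/4. -/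
open Complex Real Set ComplexConjugate

noncomputable section

/-- Lemma 8 of the paper (geometric form): for `z = m(x)` on the hyperbolic geodesic with
endpoints `ξ = m(1)`, `η = m(−1)` at infinity,
`|z−ξ|²·|z−η|²/(1−|z|²)² = |ξ−η|²/4` (the squared Gromov distance based at the origin). -/
theorem stmt7 (ξ η : ℂ) (hξ : ‖ξ‖ = 1) (hη : ‖η‖ = 1) (hne : ξ ≠ η)
    (a b : ℂ) (hab : ‖a‖ ^ 2 - ‖b‖ ^ 2 = 1)
    (m : ℂ → ℂ) (hm : m = fun z => (a * z + b) / (conj b * z + conj a))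
    (hm1 : m 1 = ξ) (hm2 : m (-1) = η) :
    ∀ x : ℝ, -1 < x → x < 1 →
      ‖m x - ξ‖ ^ 2 * ‖m x - η‖ ^ 2 /
          (1 - ‖m x‖ ^ 2) ^ 2
        = ‖ξ - η‖ ^ 2 / 4 := by
  intro x hx1 hx2
  subst hm
  simp only at hm1 hm2 ⊢
  have hP : a * conj a - b * conj b = 1 := by
    rw [Complex.mul_conj, Complex.mul_conj]
    rw [Complex.sq_norm, Complex.sq_norm] at hab
    exact_mod_cast hab
  set d1 : ℂ := conj b * 1 + conj a with hd1
  set d2 : ℂ := conj b * (-1) + conj a with hd2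
  set dx : ℂ := conj b * (x:ℂ) + conj a with hdx
  have hba : ‖b‖ < ‖a‖ := by
    nlinarith [norm_nonneg a, norm_nonneg b]
  have hdx0 : dx ≠ 0 := by
    intro h
    have h2 : conj b * (x:ℂ) = -conj a := by linear_combination h
    have h3 : ‖conj b * (x:ℂ)‖ = ‖a‖ := by
      rw [h2, norm_neg, Complex.norm_conj]
    rw [norm_mul, Complex.norm_conj, Complex.norm_real, Real.norm_eq_abs] at h3
    have : ‖b‖ * |x| ≤ ‖b‖ * 1 :=
      mul_le_mul_of_nonneg_left (by rw [abs_le]; constructor <;> linarith) (norm_nonneg b)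
    nlinarith
  have hd10 : d1 ≠ 0 := by
    intro h
    rw [h, div_zero] at hm1
    rw [← hm1] at hξ; simp at hξ
  have hd20 : d2 ≠ 0 := by
    intro h
    rw [h, div_zero] at hm2
    rw [← hm2] at hη; simp at hη
  have e1 : (a * (x:ℂ) + b) / dx - ξ = ((x:ℂ) - 1) / (dx * d1) := by
    rw [← hm1]
    field_simp
    ring_nf
    linear_combination ((x:ℂ) - 1) * hP
  have e2 : (a * (x:ℂ) + b) / dx - η = ((x:ℂ) + 1) / (dx * d2) := by
    rw [← hm2]
    field_simp
    ring_nf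
    linear_combination ((x:ℂ) + 1) * hP
  have e3 : ξ - η = 2 / (d1 * d2) := by
    rw [← hm1, ← hm2]
    field_simp
    ring_nf
    linear_combination 2 * hP
  -- abs values
  have hA : (0:ℝ) < ‖dx‖ := norm_pos_iff.mpr hdx0
  have hA1 : (0:ℝ) < ‖d1‖ := norm_pos_iff.mpr hd10
  have hA2 : (0:ℝ) < ‖d2‖ := norm_pos_iff.mpr hd20
  have f1 : ‖(a * (x:ℂ) + b) / dx - ξ‖ = (1 - x) / (‖dx‖ * ‖d1‖) := by
    rw [e1, norm_div, norm_mul]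
    congr 1
    have : ((x:ℂ) - 1) = ((x - 1 : ℝ) : ℂ) := by push_cast; ring
    rw [this, Complex.norm_real, Real.norm_eq_abs, abs_of_nonpos (by linarith)]
    ring
  have f2 : ‖(a * (x:ℂ) + b) / dx - η‖ = (x + 1) / (‖dx‖ * ‖d2‖) := by
    rw [e2, norm_div, norm_mul]
    congr 1
    have : ((x:ℂ) + 1) = ((x + 1 : ℝ) : ℂ) := by push_cast; ring
    rw [this, Complex.norm_real, Real.norm_eq_abs, _root_.abs_of_nonneg (by linarith)]
  have f3 : ‖ξ - η‖ = 2 / (‖d1‖ * ‖d2‖) := by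
    rw [e3, norm_div, norm_mul]
    norm_num
  have f4 : 1 - ‖(a * (x:ℂ) + b) / dx‖ ^ 2 = (1 - x ^ 2) / ‖dx‖ ^ 2 := by
    rw [norm_div, div_pow]
    rw [eq_div_iff (by positivity)]
    have key : ‖dx‖ ^ 2 - ‖a * (x:ℂ) + b‖ ^ 2 = 1 - x ^ 2 := by
      rw [Complex.sq_norm, Complex.sq_norm]
      have kc : dx * conj dx - (a * (x:ℂ) + b) * conj (a * (x:ℂ) + b) = 1 - (x:ℂ) ^ 2 := by
        simp only [hdx, map_add, map_mul, Complex.conj_conj, Complex.conj_ofReal]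
        linear_combination (1 - (x:ℂ)^2) * hP
      have kc2 : ((Complex.normSq dx : ℂ)) - ((Complex.normSq (a * (x:ℂ) + b) : ℂ)) = 1 - (x:ℂ)^2 := by
        rw [Complex.mul_conj, Complex.mul_conj] at kc; exact kc
      exact_mod_cast kc2
    field_simp
    linarith [key]
  have h1x : (0:ℝ) < 1 - x ^ 2 := by nlinarith
  rw [f1, f2, f3, f4]
  have hAne := hA.ne'
  have hA1ne := hA1.ne'
  have hA2ne := hA2.ne'
  have h1xne := h1x.ne'
  field_simp
  ring
end
end

section
/- Let γ(z) = (az + b)/(b̄z + ā), with a, b ∈ ℂ and |a|² − |b|² = 1, be a Möbius automorphism of the unit disk, and let d(0,z) = log((1+|z|)/(1−|z|)) be the hyperbolic distance from the origin. Then for every z in the open unit disk: exp( d(0,z) − d(0, γ^{−1}(z)) ) = (1+|z|)² / ( (1+|γ^{−1}(z)|)² · |γ'(γ^{−1}(z))| ). Moreover the right-hand side extends continuously to the closed unit disk, and its value at a boundary point ξ (|ξ| = 1) equals 1/|γ'(γ^{−1}(ξ))|. -/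
open Complex Real Set ComplexConjugate

noncomputable section

/-- The real-analytic extension claim in the proof of Proposition 3 of the paper. With
`d(0,z) = log((1+|z|)/(1−|z|))`, `γ(z) = (az+b)/(b̄z+ā)`, `γ⁻¹(z) = (āz−b)/(−b̄z+a)` and
`|γ'(w)| = |b̄w+ā|^{−2}`, one has on the open disk
`exp(d(0,z) − d(0,γ⁻¹z)) = (1+|z|)²/((1+|γ⁻¹z|)²·|γ'(γ⁻¹z)|)`;
the right-hand side is continuous on the closed disk and equals `1/|γ'(γ⁻¹ξ)|` at boundary
points `ξ`. -/
theorem stmt11 (a b : ℂ) (hab : ‖a‖ ^ 2 - ‖b‖ ^ 2 = 1)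
    (γ : ℂ → ℂ) (hγ : γ = fun z => (a * z + b) / (conj b * z + conj a))
    (γinv : ℂ → ℂ) (hγinv : γinv = fun z => (conj a * z - b) / (-(conj b) * z + a))
    (Ψ : ℂ → ℝ)
    (hΨ : Ψ = fun z => (1 + ‖z‖) ^ 2 /
      ((1 + ‖γinv z‖) ^ 2 * (‖conj b * γinv z + conj a‖ ^ 2)⁻¹)) :
    (∀ z ∈ Metric.ball (0 : ℂ) 1,
      Real.exp (Real.log ((1 + ‖z‖) / (1 - ‖z‖))
        - Real.log ((1 + ‖γinv z‖) / (1 - ‖γinv z‖))) = Ψ z)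
    ∧ ContinuousOn Ψ (Metric.closedBall (0 : ℂ) 1)
    ∧ ∀ ξ : ℂ, ‖ξ‖ = 1 →
        Ψ ξ = ((‖conj b * γinv ξ + conj a‖ ^ 2)⁻¹)⁻¹ := by
  have habC : a * conj a - b * conj b = 1 := by
    rw [Complex.mul_conj, Complex.mul_conj, ← Complex.ofReal_sub, ← Complex.ofReal_one]
    congr 1
    rw [Complex.normSq_eq_norm_sq, Complex.normSq_eq_norm_sq]
    exact hab
  have key : ∀ z : ℂ, ‖-(conj b) * z + a‖ ^ 2
      - ‖conj a * z - b‖ ^ 2 = 1 - ‖z‖ ^ 2 := by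
    intro z
    have hC : (-(conj b) * z + a) * conj (-(conj b) * z + a)
        - (conj a * z - b) * conj (conj a * z - b)
        = (a * conj a - b * conj b) * (1 - z * conj z) := by
      simp only [map_add, map_sub, map_mul, map_neg, Complex.conj_conj]
      ring
    rw [habC, Complex.mul_conj, Complex.mul_conj, Complex.mul_conj] at hC
    have h2 : (Complex.normSq (-(conj b) * z + a) : ℂ) - Complex.normSq (conj a * z - b)
        = 1 - Complex.normSq z := by rw [hC]; push_cast; ring
    have h3 := congrArg Complex.re h2
    simpa [Complex.sq_norm] using h3
  have hba : ‖b‖ < ‖a‖ := by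
    nlinarith [norm_nonneg a, norm_nonneg b]
  have hDne : ∀ z : ℂ, ‖z‖ ≤ 1 → -(conj b) * z + a ≠ 0 := by
    intro z hz h0
    have h2 : a = conj b * z := by linear_combination h0
    have h3 : ‖a‖ = ‖b‖ * ‖z‖ := by
      rw [h2]; simp [map_mul]
    nlinarith [norm_nonneg b]
  have hBW : ∀ z : ℂ, -(conj b) * z + a ≠ 0 →
      conj b * γinv z + conj a = (-(conj b) * z + a)⁻¹ := by
    intro z hD
    have hD' : -(conj b * z) + a ≠ 0 := by rwa [neg_mul] at hD
    rw [hγinv]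
    simp only
    field_simp
    linear_combination habC
  have habsBW : ∀ z : ℂ, ‖z‖ ≤ 1 →
      ‖conj b * γinv z + conj a‖ = (‖-(conj b) * z + a‖)⁻¹ := by
    intro z hz
    rw [hBW z (hDne z hz), norm_inv]
  refine ⟨?_, ?_, ?_⟩
  · intro z hz
    rw [Metric.mem_ball, dist_zero_right] at hz
    set A := ‖z‖ with hA
    have hzle : ‖z‖ ≤ 1 := le_of_lt hz
    have hD := hDne z hzle
    set d := ‖-(conj b) * z + a‖ with hd
    have hdpos : 0 < d := norm_pos_iff.mpr hD
    set W := ‖γinv z‖ with hW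
    have hWval : W = ‖conj a * z - b‖ / d := by
      rw [hW, hγinv]
      simp only
      rw [norm_div]
    have hrel : d ^ 2 * (1 - W ^ 2) = 1 - A ^ 2 := by
      rw [hWval]
      field_simp
      linear_combination key z
    have hApos : (0:ℝ) ≤ A := norm_nonneg z
    have hWpos : (0:ℝ) ≤ W := norm_nonneg _
    have h1W2 : (0:ℝ) < 1 - W ^ 2 := by
      nlinarith [mul_pos hdpos hdpos]
    have hW1 : W < 1 := by nlinarith
    have h1A : (0:ℝ) < 1 - A := by linarith
    have h1W : (0:ℝ) < 1 - W := by linarith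
    have hx : (0:ℝ) < (1 + A) / (1 - A) := div_pos (by linarith) h1A
    have hy : (0:ℝ) < (1 + W) / (1 - W) := div_pos (by linarith) h1W
    rw [Real.exp_sub, Real.exp_log hx, Real.exp_log hy, hΨ]
    simp only
    rw [habsBW z hzle, ← hW, ← hA, ← hd, inv_pow, inv_inv]
    rw [div_div_div_eq]
    rw [div_eq_div_iff (by positivity) (by positivity)]
    linear_combination (1 + A) * (1 + W) * hrel
  · have hcont_inv : ContinuousOn γinv (Metric.closedBall (0:ℂ) 1) := by
      rw [hγinv]
      apply ContinuousOn.div (by fun_prop) (by fun_prop)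
      intro z hz
      exact hDne z (by exact mem_closedBall_zero_iff.mp hz)
    rw [hΨ]
    apply ContinuousOn.div
    · exact ((continuous_const.add continuous_norm).pow 2).continuousOn
    · apply ContinuousOn.mul
      · exact ((continuousOn_const.add (continuous_norm.comp_continuousOn hcont_inv)).pow 2)
      · apply ContinuousOn.inv₀
        · exact ((continuous_norm.comp_continuousOn
            ((continuousOn_const.mul hcont_inv).add continuousOn_const)).pow 2)
        · intro z hz
          have hz' : ‖z‖ ≤ 1 := by
            exact mem_closedBall_zero_iff.mp hz
          rw [habsBW z hz']
          have := norm_pos_iff.mpr (hDne z hz')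
          positivity
    · intro z hz
      have hz' : ‖z‖ ≤ 1 := by
        exact mem_closedBall_zero_iff.mp hz
      rw [habsBW z hz']
      have hd := norm_pos_iff.mpr (hDne z hz')
      have h1 : (0:ℝ) ≤ ‖γinv z‖ := norm_nonneg _
      positivity
  · intro ξ hξ
    have hξle : ‖ξ‖ ≤ 1 := le_of_eq hξ
    have hD := hDne ξ hξle
    have hdpos := norm_pos_iff.mpr hD
    have hWone : ‖γinv ξ‖ = 1 := by
      have hk := key ξ
      rw [hξ] at hk
      have h2 : ‖conj a * ξ - b‖ ^ 2 = ‖-(conj b) * ξ + a‖ ^ 2 := by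
        linarith
      have heq : ‖conj a * ξ - b‖ = ‖-(conj b) * ξ + a‖ := by
        nlinarith [norm_nonneg (conj a * ξ - b), norm_nonneg (-(conj b) * ξ + a)]
      rw [hγinv]
      simp only
      rw [norm_div, heq, div_self (ne_of_gt hdpos)]
    rw [hΨ]
    simp only
    rw [hξ, hWone, inv_inv]
    have hbw : ‖conj b * γinv ξ + conj a‖ ≠ 0 := by
      rw [habsBW ξ hξle]
      positivity
    field_simp
end
end

section
/- Let a < b be real numbers, let D̃ : [a,b] → ℂ be continuous, let k : [a,b] → ℂ be continuously differentiable with k(θ) ≠ 0 for every θ ∈ [a,b], and let Δ ⊆ [a,b] be a dense subset. Suppose that for every β ∈ Δ: k(β)·D̃(β) = k(a)·D̃(a) + ∫_a^β k'(θ)·D̃(θ) dθ. Then D̃ is constant on [a,b]. -/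
open Complex Real Set MeasureTheory Topology Filter

noncomputable section

/-- The rigidity lemma from the proof of the main theorem: if a continuous `D̃` satisfies
`k(β)·D̃(β) = k(a)·D̃(a) + ∫_a^β k'·D̃` for all `β` in a dense subset of `[a,b]`, where `k` is
`C¹` and nonvanishing on `[a,b]`, then `D̃` is constant on `[a,b]`. -/
theorem stmt12 (a b : ℝ) (hab : a < b)
    (Dt : ℝ → ℂ) (hDt : ContinuousOn Dt (Icc a b))
    (k : ℝ → ℂ) (hk : ContDiffOn ℝ 1 k (Icc a b))
    (hk0 : ∀ θ ∈ Icc a b, k θ ≠ 0)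
    (Δ : Set ℝ) (hΔsub : Δ ⊆ Icc a b) (hΔdense : Icc a b ⊆ closure Δ)
    (hid : ∀ β ∈ Δ, k β * Dt β
      = k a * Dt a + ∫ θ in a..β, derivWithin k (Icc a b) θ * Dt θ) :
    ∀ x ∈ Icc a b, ∀ y ∈ Icc a b, Dt x = Dt y := by
  set s := Icc a b with hsdef
  have husd : UniqueDiffOn ℝ s := uniqueDiffOn_Icc hab
  set g : ℝ → ℂ := fun θ => derivWithin k s θ * Dt θ with hgdef
  have hgcont : ContinuousOn g s :=
    (hk.continuousOn_derivWithin husd le_rfl).mul hDt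
  have ha : a ∈ s := ⟨le_rfl, hab.le⟩
  -- FTC: the primitive has derivative g within s
  have hG : ∀ x ∈ s, HasDerivWithinAt (fun u => ∫ θ in a..u, g θ) (g x) s x := by
    intro x hx
    haveI : Fact (x ∈ Icc a b) := ⟨hx⟩
    refine intervalIntegral.integral_hasDerivWithinAt_right ?_ ?_ (hgcont x hx)
    · exact (hgcont.mono (uIcc_subset_Icc ha hx)).intervalIntegrable
    · exact hgcont.stronglyMeasurableAtFilter_nhdsWithin measurableSet_Icc x
  -- extend the identity from Δ to all of s by continuity
  have hid' : ∀ β ∈ s, k β * Dt β = k a * Dt a + ∫ θ in a..β, g θ := by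
    intro β hβ
    have hne : (𝓝[Δ] β).NeBot := mem_closure_iff_nhdsWithin_neBot.mp (hΔdense hβ)
    have hL : ContinuousWithinAt (fun x => k x * Dt x) s β :=
      (hk.continuousOn.mul hDt) β hβ
    have hR : ContinuousWithinAt (fun x => k a * Dt a + ∫ θ in a..x, g θ) s β :=
      (continuousWithinAt_const).add (hG β hβ).continuousWithinAt
    have h1 : Filter.Tendsto (fun x => k x * Dt x) (𝓝[Δ] β) (𝓝 (k β * Dt β)) :=
      hL.mono_left (nhdsWithin_mono β hΔsub)
    have h2 : Filter.Tendsto (fun x => k x * Dt x) (𝓝[Δ] β)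
        (𝓝 (k a * Dt a + ∫ θ in a..β, g θ)) := by
      have := hR.mono_left (nhdsWithin_mono β hΔsub)
      refine this.congr' ?_
      filter_upwards [self_mem_nhdsWithin] with x hx
      exact (hid x hx).symm
    exact tendsto_nhds_unique h1 h2
  -- Dt has derivative 0 within s
  have hDt' : ∀ x ∈ s, HasDerivWithinAt Dt 0 s x := by
    intro x hx
    have hkd : HasDerivWithinAt k (derivWithin k s x) s x :=
      ((hk.differentiableOn one_ne_zero) x hx).hasDerivWithinAt
    have hkDt : HasDerivWithinAt (fun u => k u * Dt u) (g x) s x := by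
      have := (hasDerivWithinAt_const x s (k a * Dt a)).add (hG x hx)
      rw [zero_add] at this
      exact this.congr (fun y hy => hid' y hy) (hid' x hx)
    have hdiv := hkDt.div hkd (hk0 x hx)
    have heq : (g x * k x - k x * Dt x * derivWithin k s x) / k x ^ 2 = 0 := by
      have hkx := hk0 x hx
      simp only [hgdef]
      field_simp
      ring
    rw [heq] at hdiv
    exact hdiv.congr (fun y hy => (mul_div_cancel_left₀ (Dt y) (hk0 y hy)).symm)
      (mul_div_cancel_left₀ (Dt x) (hk0 x hx)).symm
  -- conclude constancy via the mean value inequality on the convex set s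
  intro x hx y hy
  have h := Convex.norm_image_sub_le_of_norm_hasDerivWithin_le
    (f' := fun _ => (0 : ℂ)) (C := 0) (fun z hz => hDt' z hz)
    (fun z hz => by simp) (convex_Icc a b) hy hx
  rw [zero_mul] at h
  exact sub_eq_zero.mp (norm_le_zero_iff.mp h)
end
end

section
/- Let t ∈ ℝ, s = 1/2 + it, let w₀ be a point of the open unit disk D ⊂ ℂ, let d(z,w) = log((|1 − z̄w| + |z − w|)/(|1 − z̄w| − |z − w|)) be the hyperbolic distance on D, and set z(r,θ) = tanh(r/2)·e^{iθ}. Then there exist constants C > 0 and R₀ > 0 such that for all r ≥ R₀ and all θ ∈ ℝ: | ∂/∂r [ exp(−s·d(w₀, z(r,θ))) ] + s·exp(−s·d(w₀, z(r,θ))) | ≤ C·e^{−3r/2}. -/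
open Complex Real Set Filter Topology ComplexConjugate

set_option maxHeartbeats 1000000

noncomputable section

/-- The hyperbolic distance on the unit disk,
`d(z,w) = log((|1−z̄w|+|z−w|)/(|1−z̄w|−|z−w|))`. -/
def hdist (z w : ℂ) : ℝ :=
  Real.log ((‖1 - conj z * w‖ + ‖z - w‖) /
    (‖1 - conj z * w‖ - ‖z - w‖))

lemma myTanh_formula (y : ℝ) :
    Real.tanh y = (Real.exp y - Real.exp (-y)) / (Real.exp y + Real.exp (-y)) := by
  rw [Real.tanh_eq_sinh_div_cosh, Real.sinh_eq, Real.cosh_eq]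
  field_simp

lemma myTanh_lt_one (y : ℝ) : Real.tanh y < 1 := by
  rw [myTanh_formula]
  rw [div_lt_one (by positivity)]
  linarith [Real.exp_pos (-y)]

lemma myNeg_one_lt_tanh (y : ℝ) : -1 < Real.tanh y := by
  rw [myTanh_formula]
  rw [lt_div_iff₀ (by positivity)]
  linarith [Real.exp_pos y]

lemma myOne_sub_tanh_le (y : ℝ) : 1 - Real.tanh y ≤ 2 * Real.exp (-2 * y) := by
  rw [myTanh_formula]
  have h1 : (0:ℝ) < Real.exp y + Real.exp (-y) := by positivity
  rw [sub_div' h1.ne', div_le_iff₀ h1]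
  have : Real.exp (-2*y) * Real.exp y = Real.exp (-y) := by
    rw [← Real.exp_add]; ring_nf
  nlinarith [Real.exp_pos (-y), Real.exp_pos y, Real.exp_pos (-2*y),
    mul_pos (Real.exp_pos (-2*y)) (Real.exp_pos (-y))]

lemma myHasDerivAt_tanh (y : ℝ) : HasDerivAt Real.tanh (1 - Real.tanh y ^ 2) y := by
  have h := (Real.hasDerivAt_sinh y).div (Real.hasDerivAt_cosh y) (Real.cosh_pos y).ne'
  have he : (Real.sinh / Real.cosh) = Real.tanh := by
    funext x; rw [Pi.div_apply, Real.tanh_eq_sinh_div_cosh]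
  rw [he] at h
  refine h.congr_deriv ?_
  rw [Real.tanh_eq_sinh_div_cosh]
  have := Real.cosh_sq_sub_sinh_sq y
  field_simp

lemma myNormSq_aux (p q : ℂ) (x : ℝ) :
    Complex.normSq (p - q * x) =
      Complex.normSq p - 2 * (conj p * q).re * x + Complex.normSq q * x ^ 2 := by
  simp only [Complex.normSq_apply, Complex.sub_re, Complex.sub_im, Complex.mul_re, Complex.mul_im,
    Complex.ofReal_re, Complex.ofReal_im, Complex.conj_re, Complex.conj_im]
  ring

/-- `|1 - conj w₀ * (x e^{iθ})|² = 1 - 2ux + a²x²`. -/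
lemma myQA_eq (w₀ : ℂ) (θ x : ℝ) :
    Complex.normSq (1 - conj w₀ * ((x : ℂ) * Complex.exp ((θ:ℝ) * Complex.I))) =
      1 - 2 * (conj w₀ * Complex.exp ((θ:ℝ) * Complex.I)).re * x
        + ‖w₀‖ ^ 2 * x ^ 2 := by
  have h : (1 : ℂ) - conj w₀ * ((x : ℂ) * Complex.exp ((θ:ℝ) * Complex.I))
      = 1 - (conj w₀ * Complex.exp ((θ:ℝ) * Complex.I)) * (x : ℂ) := by ring
  rw [h, myNormSq_aux]
  have he : ‖Complex.exp ((θ:ℝ) * Complex.I)‖ = 1 :=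
    Complex.norm_exp_ofReal_mul_I θ
  rw [Complex.normSq_one, Complex.normSq_mul, Complex.normSq_eq_norm_sq, Complex.normSq_eq_norm_sq,
    he, Complex.norm_conj]
  simp

lemma myQB_eq (w₀ : ℂ) (θ x : ℝ) :
    Complex.normSq (w₀ - ((x : ℂ) * Complex.exp ((θ:ℝ) * Complex.I))) =
      ‖w₀‖ ^ 2 - 2 * (conj w₀ * Complex.exp ((θ:ℝ) * Complex.I)).re * x + x ^ 2 := by
  have h : w₀ - ((x : ℂ) * Complex.exp ((θ:ℝ) * Complex.I))
      = w₀ - (Complex.exp ((θ:ℝ) * Complex.I)) * (x : ℂ) := by ring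
  rw [h, myNormSq_aux]
  have he : ‖Complex.exp ((θ:ℝ) * Complex.I)‖ = 1 :=
    Complex.norm_exp_ofReal_mul_I θ
  rw [Complex.normSq_eq_norm_sq, Complex.normSq_eq_norm_sq, he]
  ring

def myU (w₀ : ℂ) (θ : ℝ) : ℝ := (conj w₀ * Complex.exp ((θ:ℝ) * Complex.I)).re
def myQA (w₀ : ℂ) (θ x : ℝ) : ℝ := 1 - 2 * myU w₀ θ * x + ‖w₀‖ ^ 2 * x ^ 2
def myQB (w₀ : ℂ) (θ x : ℝ) : ℝ := ‖w₀‖ ^ 2 - 2 * myU w₀ θ * x + x ^ 2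

lemma myU_abs_le (w₀ : ℂ) (θ : ℝ) : |myU w₀ θ| ≤ ‖w₀‖ := by
  have h := Complex.abs_re_le_norm (conj w₀ * Complex.exp ((θ:ℝ) * Complex.I))
  rwa [norm_mul, Complex.norm_conj, Complex.norm_exp_ofReal_mul_I, mul_one] at h

lemma myQA_pos (w₀ : ℂ) (hw : ‖w₀‖ < 1) (θ x : ℝ) (hx : |x| < 1) :
    0 < myQA w₀ θ x := by
  rw [myQA, myU, ← myQA_eq]
  apply Complex.normSq_pos.2
  intro h
  have h0 : ‖conj w₀ * ((x : ℂ) * Complex.exp ((θ:ℝ) * Complex.I))‖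
      = ‖w₀‖ * |x| := by
    rw [norm_mul, norm_mul, Complex.norm_conj, Complex.norm_exp_ofReal_mul_I, Complex.norm_real,
      Real.norm_eq_abs, mul_one]
  have h1 : (1:ℂ) = conj w₀ * ((x : ℂ) * Complex.exp ((θ:ℝ) * Complex.I)) :=
    by linear_combination h
  have h2 := congrArg (‖·‖) h1
  rw [h0, norm_one] at h2
  have hx0 : (0:ℝ) ≤ |x| := abs_nonneg x
  have ha0 : (0:ℝ) ≤ ‖w₀‖ := norm_nonneg w₀
  nlinarith

lemma myQB_nonneg (w₀ : ℂ) (θ x : ℝ) : 0 ≤ myQB w₀ θ x := by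
  rw [myQB, myU, ← myQB_eq]; exact Complex.normSq_nonneg _

lemma myHdist_eq (w₀ : ℂ) (hw : ‖w₀‖ < 1) (θ x : ℝ) (hx : |x| < 1) :
    hdist w₀ ((x : ℂ) * Complex.exp ((θ:ℝ) * Complex.I)) =
      2 * Real.log (Real.sqrt (myQA w₀ θ x) + Real.sqrt (myQB w₀ θ x))
        - Real.log (1 - x ^ 2) - Real.log (1 - ‖w₀‖ ^ 2) := by
  have ha0 : (0:ℝ) ≤ ‖w₀‖ := norm_nonneg w₀
  have ha1 : 1 - ‖w₀‖ ^ 2 > 0 := by nlinarith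
  have hx1 : 1 - x ^ 2 > 0 := by nlinarith [abs_nonneg x, _root_.sq_abs x, abs_lt.1 hx]
  have hqa := myQA_pos w₀ hw θ x hx
  have hqb := myQB_nonneg w₀ θ x
  have hdiff : myQA w₀ θ x - myQB w₀ θ x = (1 - ‖w₀‖ ^ 2) * (1 - x ^ 2) := by
    rw [myQA, myQB]; ring
  set A := Real.sqrt (myQA w₀ θ x) with hA
  set B := Real.sqrt (myQB w₀ θ x) with hB
  have hA2 : A ^ 2 = myQA w₀ θ x := Real.sq_sqrt hqa.le
  have hB2 : B ^ 2 = myQB w₀ θ x := Real.sq_sqrt hqb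
  have hApos : 0 < A := Real.sqrt_pos.2 hqa
  have hBnn : 0 ≤ B := Real.sqrt_nonneg _
  have hBA : B < A := by
    rw [hA, hB]; exact Real.sqrt_lt_sqrt hqb (by nlinarith)
  have habs1 : ‖1 - conj w₀ * ((x : ℂ) * Complex.exp ((θ:ℝ) * Complex.I))‖ = A := by
    rw [hA, Complex.norm_def, myQA_eq, myQA, myU]
  have habs2 : ‖w₀ - (x : ℂ) * Complex.exp ((θ:ℝ) * Complex.I)‖ = B := by
    rw [hB, Complex.norm_def, myQB_eq, myQB, myU]
  rw [hdist, habs1, habs2]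
  have hABpos : 0 < A + B := by linarith
  have hABpos' : 0 < A - B := by linarith
  have hprod : (A - B) * (A + B) = (1 - ‖w₀‖ ^ 2) * (1 - x ^ 2) := by
    nlinarith [hA2, hB2, hdiff]
  have hAmB : A - B = (1 - ‖w₀‖ ^ 2) * (1 - x ^ 2) / (A + B) :=
    eq_div_of_mul_eq hABpos.ne' hprod
  rw [Real.log_div hABpos.ne' hABpos'.ne', hAmB,
    Real.log_div (by positivity) hABpos.ne',
    Real.log_mul ha1.ne' hx1.ne']
  ring

/-- The decay estimate for the translated spherical kernel `g' = exp(−s·d(w₀,·))` along the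
hyperbolic circles of radius `r` about the origin:
`|∂/∂r e^{−s·d(w₀,z(r,θ))} + s·e^{−s·d(w₀,z(r,θ))}| ≤ C·e^{−3r/2}` for `r` large. -/
theorem stmt13 (t : ℝ) (w₀ : ℂ) (hw₀ : w₀ ∈ Metric.ball (0 : ℂ) 1) :
    ∃ C > 0, ∃ R₀ > 0, ∀ r ≥ R₀, ∀ θ : ℝ,
      ‖deriv (fun r' : ℝ => Complex.exp (-((1 : ℂ) / 2 + t * Complex.I) *
            (hdist w₀ ((Real.tanh (r' / 2) : ℂ) * Complex.exp (θ * Complex.I)) : ℝ))) r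
        + ((1 : ℂ) / 2 + t * Complex.I) * Complex.exp (-((1 : ℂ) / 2 + t * Complex.I) *
            (hdist w₀ ((Real.tanh (r / 2) : ℂ) * Complex.exp (θ * Complex.I)) : ℝ))‖
      ≤ C * Real.exp (-3 * r / 2) := by
  have ha0 : (0:ℝ) ≤ ‖w₀‖ := norm_nonneg w₀
  have ha1 : ‖w₀‖ < 1 := by
    simpa using mem_ball_zero_iff.1 hw₀
  set a : ℝ := ‖w₀‖ with ha_def
  have h1a : (0:ℝ) < 1 - a := by linarith
  set s : ℂ := (1 : ℂ) / 2 + t * Complex.I with hs_def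
  have hs_ne : s ≠ 0 := by
    intro h
    have h2 : s.re = 0 := by rw [h]; simp
    rw [hs_def] at h2; simp at h2
  have hsn : 0 < ‖s‖ := norm_pos_iff.2 hs_ne
  set K : ℝ := 1 + 12 / (1 - a) ^ 2 with hK_def
  have hKpos : 0 < K := by
    rw [hK_def]
    have : 0 < 12 / (1-a)^2 := by positivity
    linarith
  set c₀ : ℝ := Real.log 4 - 2 * Real.log (1 - a) + Real.log (1 - a ^ 2) with hc0_def
  clear_value K c₀
  refine ⟨2 * ‖s‖ * K * Real.exp (c₀ / 2),
    mul_pos (mul_pos (mul_pos two_pos hsn) hKpos) (Real.exp_pos _),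
    max 1 (Real.log (4 / (1 - a))), lt_of_lt_of_le one_pos (le_max_left _ _), ?_⟩
  intro r hr θ
  have hr1 : (1:ℝ) ≤ r := le_trans (le_max_left _ _) hr
  have hexp : Real.exp (-r) ≤ (1 - a) / 4 := by
    have h4 : (0:ℝ) < 4 / (1 - a) := by positivity
    have h5 : Real.exp (-r) ≤ Real.exp (-(Real.log (4 / (1-a)))) :=
      Real.exp_le_exp.2 (neg_le_neg (le_trans (le_max_right _ _) hr))
    have h6 : Real.exp (-(Real.log (4 / (1-a)))) = (1-a)/4 := by
      rw [Real.exp_neg, Real.exp_log h4, inv_div]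
    rw [h6] at h5
    exact h5
  set x : ℝ := Real.tanh (r / 2) with hx_def
  have hx_lt1 : x < 1 := myTanh_lt_one _
  have hx_gtm1 : -1 < x := myNeg_one_lt_tanh _
  have hx_sub : 1 - x ≤ 2 * Real.exp (-r) := by
    have h := myOne_sub_tanh_le (r / 2)
    rw [hx_def]
    convert h using 3
    ring
  have hx_ge : (1 + a) / 2 ≤ x := by nlinarith
  have hx_pos : 0 < x := by nlinarith
  have hx_gt_a : a < x := by nlinarith
  set u : ℝ := myU w₀ θ with hu_def
  have hu : |u| ≤ a := myU_abs_le w₀ θ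
  have hu' := abs_le.1 hu
  -- positivity of the quadratics at x
  have hqa_pos : 0 < 1 - 2*u*x + a^2*x^2 := by
    have := myQA_pos w₀ ha1 θ x (abs_lt.2 ⟨hx_gtm1, hx_lt1⟩)
    rwa [myQA, ← hu_def, ← ha_def] at this
  have hqb_pos : 0 < a^2 - 2*u*x + x^2 := by nlinarith
  set A : ℝ := Real.sqrt (1 - 2*u*x + a^2*x^2) with hA_def
  set B : ℝ := Real.sqrt (a^2 - 2*u*x + x^2) with hB_def
  have hA2 : A ^ 2 = 1 - 2*u*x + a^2*x^2 := Real.sq_sqrt hqa_pos.le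
  have hB2 : B ^ 2 = a^2 - 2*u*x + x^2 := Real.sq_sqrt hqb_pos.le
  have hApos : 0 < A := Real.sqrt_pos.2 hqa_pos
  have hBpos : 0 < B := Real.sqrt_pos.2 hqb_pos
  have hA_lb : 1 - a ≤ A := by
    have h1 : (1 - a*x)^2 ≤ 1 - 2*u*x + a^2*x^2 := by nlinarith
    have h2 : 1 - a*x ≤ A := by
      rw [hA_def]
      calc 1 - a*x = Real.sqrt ((1-a*x)^2) := (Real.sqrt_sq (by nlinarith)).symm
        _ ≤ _ := Real.sqrt_le_sqrt h1
    nlinarith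
  have hB_lb : (1 - a)/2 ≤ B := by
    have h1 : (x - a)^2 ≤ a^2 - 2*u*x + x^2 := by nlinarith
    have h2 : x - a ≤ B := by
      rw [hB_def]
      calc x - a = Real.sqrt ((x-a)^2) := (Real.sqrt_sq (by nlinarith)).symm
        _ ≤ _ := Real.sqrt_le_sqrt h1
    nlinarith
  have hABpos : 0 < A + B := by linarith
  have hx2pos : 0 < 1 - x^2 := by nlinarith
  -- the nice form of the distance function along the ray
  set g : ℝ → ℝ := fun r' =>
    2 * Real.log (Real.sqrt (myQA w₀ θ (Real.tanh (r'/2))) +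
        Real.sqrt (myQB w₀ θ (Real.tanh (r'/2))))
      - Real.log (1 - Real.tanh (r'/2) ^ 2) - Real.log (1 - a ^ 2) with hg_def
  have hpt : ∀ r' : ℝ, hdist w₀ ((Real.tanh (r' / 2) : ℂ) * Complex.exp (θ * Complex.I))
      = g r' := by
    intro r'
    rw [myHdist_eq w₀ ha1 θ _ (abs_lt.2 ⟨myNeg_one_lt_tanh _, myTanh_lt_one _⟩), hg_def]
  have hfun : (fun r' : ℝ => Complex.exp (-s *
        (hdist w₀ ((Real.tanh (r' / 2) : ℂ) * Complex.exp (θ * Complex.I)) : ℝ)))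
      = fun r' : ℝ => Complex.exp (-s * ((g r' : ℝ) : ℂ)) := by
    funext r'
    rw [hpt r']
  -- derivative of g at r
  have h2 : HasDerivAt (fun r' : ℝ => r' / 2) (1/2) r := (hasDerivAt_id r).div_const 2
  have htanh : HasDerivAt (fun r' : ℝ => Real.tanh (r'/2)) ((1 - x^2) * (1/2)) r := by
    have := (myHasDerivAt_tanh (r/2)).comp r h2
    exact this
  have e1 : HasDerivAt (fun y : ℝ => 2*u*y) (2*u) x := by
    simpa using (hasDerivAt_id x).const_mul (2*u)
  have e3 : HasDerivAt (fun y : ℝ => a^2*y^2) (a^2*(2*x)) x := by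
    have := (hasDerivAt_pow 2 x).const_mul (a^2 : ℝ)
    simpa using this
  have e4 : HasDerivAt (fun y : ℝ => y^2) (2*x) x := by
    simpa using hasDerivAt_pow 2 x
  have hpolyA : HasDerivAt (fun y : ℝ => myQA w₀ θ y) (-(2*u) + a^2*(2*x)) x := by
    simp only [myQA, ← hu_def, ← ha_def]
    exact (e1.const_sub 1).add e3
  have hpolyB : HasDerivAt (fun y : ℝ => myQB w₀ θ y) (-(2*u) + 2*x) x := by
    simp only [myQB, ← hu_def, ← ha_def]
    exact ((e1.const_sub (a^2)).add e4)
  have hQA' : HasDerivAt (fun r' : ℝ => myQA w₀ θ (Real.tanh (r'/2)))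
      ((-(2*u) + a^2*(2*x)) * ((1 - x^2) * (1/2))) r := by
    have := hpolyA.comp r htanh
    exact this
  have hQB' : HasDerivAt (fun r' : ℝ => myQB w₀ θ (Real.tanh (r'/2)))
      ((-(2*u) + 2*x) * ((1 - x^2) * (1/2))) r := by
    have := hpolyB.comp r htanh
    exact this
  have hqa_x : myQA w₀ θ (Real.tanh (r/2)) = 1 - 2*u*x + a^2*x^2 := by
    rw [myQA, ← hu_def, ← ha_def, ← hx_def]
  have hqb_x : myQB w₀ θ (Real.tanh (r/2)) = a^2 - 2*u*x + x^2 := by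
    rw [myQB, ← hu_def, ← ha_def, ← hx_def]
  have hA' : HasDerivAt (fun r' : ℝ => Real.sqrt (myQA w₀ θ (Real.tanh (r'/2))))
      ((-(2*u) + a^2*(2*x)) * ((1 - x^2) * (1/2)) / (2 * A)) r := by
    have := hQA'.sqrt (by rw [hqa_x]; exact hqa_pos.ne')
    rwa [hqa_x, ← hA_def] at this
  have hB' : HasDerivAt (fun r' : ℝ => Real.sqrt (myQB w₀ θ (Real.tanh (r'/2))))
      ((-(2*u) + 2*x) * ((1 - x^2) * (1/2)) / (2 * B)) r := by
    have := hQB'.sqrt (by rw [hqb_x]; exact hqb_pos.ne')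
    rwa [hqb_x, ← hB_def] at this
  have hsum_x : Real.sqrt (myQA w₀ θ (Real.tanh (r/2)))
      + Real.sqrt (myQB w₀ θ (Real.tanh (r/2))) = A + B := by
    rw [hqa_x, hqb_x, ← hA_def, ← hB_def]
  have hlog1 : HasDerivAt (fun r' : ℝ => 2 * Real.log (Real.sqrt (myQA w₀ θ (Real.tanh (r'/2))) +
        Real.sqrt (myQB w₀ θ (Real.tanh (r'/2)))))
      (2 * (((-(2*u) + a^2*(2*x)) * ((1 - x^2) * (1/2)) / (2 * A)
        + (-(2*u) + 2*x) * ((1 - x^2) * (1/2)) / (2 * B)) / (A + B))) r := by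
    have := ((hA'.add hB').log (by simp only [Pi.add_apply]; rw [hsum_x]; exact hABpos.ne')).const_mul 2
    simp only [Pi.add_apply] at this
    rwa [hsum_x] at this
  have hlog2 : HasDerivAt (fun r' : ℝ => Real.log (1 - Real.tanh (r'/2) ^ 2))
      ((-(2 * x ^ 1 * ((1 - x^2) * (1/2)))) / (1 - x^2)) r := by
    have hin : HasDerivAt (fun r' : ℝ => 1 - Real.tanh (r'/2) ^ 2)
        (-(2 * x ^ 1 * ((1 - x^2) * (1/2)))) r := by
      have := (htanh.pow 2).const_sub 1
      simpa [hx_def] using this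
    have h7 := hin.log (by rw [← hx_def]; exact hx2pos.ne')
    rwa [← hx_def] at h7
  set dg : ℝ := x + (1 - x^2) * ((a^2*x - u)/A + (x - u)/B) / (A + B) with hdg_def
  have hg' : HasDerivAt g dg r := by
    have hraw := (hlog1.sub hlog2).sub_const (Real.log (1 - a^2))
    rw [hg_def]
    refine hraw.congr_deriv ?_
    rw [hdg_def]
    field_simp
    ring
  clear_value a x u A B dg g
  -- the complex derivative
  have hgC : HasDerivAt (fun r' : ℝ => Complex.exp (-s * ((g r' : ℝ) : ℂ)))
      (Complex.exp (-s * ((g r : ℝ) : ℂ)) * (-s * (dg : ℂ))) r :=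
    (hg'.ofReal_comp.const_mul (-s)).cexp
  rw [hfun, hgC.deriv, hx_def, hpt r]
  have heq : Complex.exp (-s * ((g r : ℝ) : ℂ)) * (-s * (dg : ℂ))
      + s * Complex.exp (-s * ((g r : ℝ) : ℂ))
      = s * (((1 - dg : ℝ) : ℂ)) * Complex.exp (-s * ((g r : ℝ) : ℂ)) := by
    push_cast
    ring
  rw [heq]
  -- norm computation
  have hnorm : ‖s * (((1 - dg : ℝ) : ℂ)) * Complex.exp (-s * ((g r : ℝ) : ℂ))‖
      = ‖s‖ * |1 - dg| * Real.exp (-(g r) / 2) := by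
    rw [norm_mul, norm_mul, Complex.norm_real, Real.norm_eq_abs]
    congr 1
    rw [Complex.norm_exp, hs_def]
    congr 1
    simp [Complex.mul_re]
    ring
  rw [hnorm]
  clear hfun hgC heq hnorm hpt hg' h2 hs_ne hw₀
  -- bound |1 - dg|
  have ha2 : a^2 ≤ 1 := by nlinarith [ha0, ha1]
  have hax1 : a^2*x ≤ 1 :=
    le_trans (mul_le_of_le_one_right (sq_nonneg a) hx_lt1.le) ha2
  have hax0 : 0 ≤ a^2*x := mul_nonneg (sq_nonneg a) hx_pos.le
  have hb1 : |a^2*x - u| ≤ 2 := abs_le.2 ⟨by linarith [hu'.2], by linarith [hu'.1]⟩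
  have hb2 : |x - u| ≤ 2 := abs_le.2 ⟨by linarith [hu'.2], by linarith [hu'.1]⟩
  have hd1 : |a^2*x - u| / A ≤ 2 / (1-a) := div_le_div₀ (by norm_num) hb1 h1a hA_lb
  have hd2 : |x - u| / B ≤ 4 / (1-a) := by
    have h := div_le_div₀ (by norm_num) hb2 (by linarith : (0:ℝ) < (1-a)/2) hB_lb
    have he : (2:ℝ) / ((1-a)/2) = 4 / (1-a) := by
      field_simp
      ring
    rwa [he] at h
  have hT : |(a^2*x - u)/A + (x - u)/B| ≤ 6 / (1-a) := by
    calc |(a^2*x - u)/A + (x - u)/B| ≤ |(a^2*x - u)/A| + |(x - u)/B| := abs_add_le _ _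
      _ = |a^2*x - u|/A + |x - u|/B := by
          rw [abs_div, abs_div, abs_of_pos hApos, abs_of_pos hBpos]
      _ ≤ 2/(1-a) + 4/(1-a) := add_le_add hd1 hd2
      _ = 6/(1-a) := by ring
  have habs_dg : |1 - dg| ≤ (1 - x) * K := by
    have hrw : 1 - dg = (1 - x) - (1 - x^2) * ((a^2*x - u)/A + (x - u)/B) / (A + B) := by
      rw [hdg_def]; ring
    have htri : |1 - dg| ≤ |1 - x| + |(1 - x^2) * ((a^2*x - u)/A + (x - u)/B) / (A + B)| := by
      rw [hrw]; exact abs_sub _ _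
    have hQ : |(1 - x^2) * ((a^2*x - u)/A + (x - u)/B) / (A + B)|
        ≤ (2*(1-x)) * (6/(1-a)) / (1-a) := by
      rw [abs_div, abs_mul, abs_of_pos hABpos, abs_of_pos hx2pos]
      have hnum : (1 - x^2) * |(a^2*x - u)/A + (x - u)/B| ≤ (2*(1-x)) * (6/(1-a)) := by
        have h1x2 : 1 - x^2 ≤ 2*(1-x) := by
          have hh : 1 - x^2 = (1-x)*(1+x) := by ring
          have hh2 : (1-x)*(1+x) ≤ (1-x)*2 := by
            apply mul_le_mul_of_nonneg_left (by linarith) (by linarith)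
          linarith
        exact mul_le_mul h1x2 hT (abs_nonneg _) (by linarith)
      exact div_le_div₀ (mul_nonneg (by linarith) (div_nonneg (by norm_num) h1a.le))
        hnum h1a (by linarith)
    have hKe : (1-x) + (2*(1-x))*(6/(1-a))/(1-a) = (1-x)*K := by
      rw [hK_def]
      field_simp
      ring
    have habs1x : |1 - x| = 1 - x := abs_of_nonneg (by linarith)
    linarith [htri, hQ, habs1x.le, habs1x.ge]
  -- lower bound for g r
  have hgr : g r = 2*Real.log (A+B) - Real.log (1-x^2) - Real.log (1-a^2) := by
    rw [hg_def]
    show 2 * Real.log (Real.sqrt (myQA w₀ θ (Real.tanh (r/2))) +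
        Real.sqrt (myQB w₀ θ (Real.tanh (r/2))))
      - Real.log (1 - Real.tanh (r/2) ^ 2) - Real.log (1 - a ^ 2) = _
    rw [hsum_x, ← hx_def]
  have hgr_lb : r - c₀ ≤ g r := by
    have hlogAB : Real.log (1-a) ≤ Real.log (A+B) := Real.log_le_log h1a (by linarith)
    have h1x2e : 1 - x^2 ≤ 4*Real.exp (-r) := by
      have hh : 1 - x^2 = (1-x)*(1+x) := by ring
      have hh2 : (1-x)*(1+x) ≤ (2*Real.exp (-r))*2 :=
        mul_le_mul hx_sub (by linarith) (by linarith) (by positivity)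
      linarith
    have hlogx : Real.log (1-x^2) ≤ Real.log 4 - r := by
      have h8 := Real.log_le_log hx2pos h1x2e
      rwa [Real.log_mul (by norm_num) (Real.exp_ne_zero _), Real.log_exp] at h8
    rw [hgr, hc0_def]
    linarith
  have hE : Real.exp (-(g r)/2) ≤ Real.exp (c₀/2) * Real.exp (-r/2) := by
    rw [← Real.exp_add]
    apply Real.exp_le_exp.2
    linarith
  calc ‖s‖ * |1 - dg| * Real.exp (-(g r)/2)
      ≤ ‖s‖ * ((1-x)*K) * (Real.exp (c₀/2) * Real.exp (-r/2)) := by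
        apply mul_le_mul (mul_le_mul le_rfl habs_dg (abs_nonneg _) (norm_nonneg _)) hE
          (Real.exp_pos _).le
        have : 0 ≤ 1 - x := by linarith
        positivity
    _ ≤ ‖s‖ * ((2*Real.exp (-r))*K) * (Real.exp (c₀/2) * Real.exp (-r/2)) := by
        have h9 : (1-x)*K ≤ (2*Real.exp (-r))*K := mul_le_mul_of_nonneg_right hx_sub hKpos.le
        exact mul_le_mul_of_nonneg_right (mul_le_mul_of_nonneg_left h9 (norm_nonneg s))
          (by positivity)
    _ = 2 * ‖s‖ * K * Real.exp (c₀/2) * Real.exp (-3*r/2) := by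
        rw [show (-3*r/2 : ℝ) = -r + (-r/2) by ring, Real.exp_add]
        ring
end
end

section
/- Let X and Y be sets, Σ̂ ⊆ X × Y, T̂ : Σ̂ → Σ̂ a bijection, and T_L : X → X, T_R : Y → Y maps such that for every (ξ,η) ∈ Σ̂ the first coordinate of T̂(ξ,η) is T_L(ξ) and for every (ξ',η') ∈ Σ̂ the second coordinate of T̂^{−1}(ξ',η') is T_R(η'). Let A_L : X → ℂ, A_R : Y → ℂ, and let k : X × Y → ℂ satisfy k(ξ,η) = 0 for (ξ,η) ∉ Σ̂ and the involution law: for every (ξ,η) ∈ Σ̂, writing (ξ',η') = T̂(ξ,η), k(ξ,η)·e^{A_L(ξ)} = k(ξ',η')·e^{A_R(η')}. Fix ξ' ∈ X and η ∈ Y and assume the preimage sets { ξ : T_L(ξ) = ξ' } and { η' : T_R(η') = η } are finite. Then Σ_{η' : T_R(η') = η} k(ξ',η')·e^{A_R(η')} = Σ_{ξ : T_L(ξ) = ξ'} k(ξ,η)·e^{A_L(ξ)}. -/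
open Set

/-- Lemma 10 of the paper: if `k` is an involution kernel for the potentials `A_L`, `A_R`
relative to a baker-type bijection `T̂` of `Sig ⊆ X × Y` (with left factor `T_L` and inverse
right factor `T_R`), then `L_R(k(ξ',·))(η) = L_L(k(·,η))(ξ')`. -/
theorem stmt17 {X Y : Type*} (Sig : Set (X × Y)) (That : X × Y → X × Y)
    (hbij : Set.BijOn That Sig Sig)
    (TL : X → X) (TR : Y → Y)
    (hL : ∀ p ∈ Sig, (That p).1 = TL p.1)
    (hR : ∀ p ∈ Sig, p.2 = TR (That p).2)
    (AL : X → ℂ) (AR : Y → ℂ) (k : X × Y → ℂ)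
    (hk0 : ∀ p : X × Y, p ∉ Sig → k p = 0)
    (hinv : ∀ p ∈ Sig, k p * Complex.exp (AL p.1) = k (That p) * Complex.exp (AR (That p).2))
    (ξ' : X) (η : Y)
    (hfinL : {ξ : X | TL ξ = ξ'}.Finite)
    (hfinR : {η' : Y | TR η' = η}.Finite) :
    ∑ᶠ η' ∈ {η' : Y | TR η' = η}, k (ξ', η') * Complex.exp (AR η')
      = ∑ᶠ ξ ∈ {ξ : X | TL ξ = ξ'}, k (ξ, η) * Complex.exp (AL ξ) := by
  set sR : Set Y := {η' : Y | TR η' = η ∧ (ξ', η') ∈ Sig} with hsR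
  set sL : Set X := {ξ : X | TL ξ = ξ' ∧ (ξ, η) ∈ Sig} with hsL
  have hstepR : ∑ᶠ η' ∈ {η' : Y | TR η' = η}, k (ξ', η') * Complex.exp (AR η')
      = ∑ᶠ η' ∈ sR, k (ξ', η') * Complex.exp (AR η') := by
    apply finsum_mem_inter_support_eq _ _ _
    ext y
    simp only [Set.mem_inter_iff, Function.mem_support, hsR, Set.mem_setOf_eq]
    constructor
    · rintro ⟨hy, hne⟩
      refine ⟨⟨hy, ?_⟩, hne⟩
      by_contra hns
      exact hne (by rw [hk0 _ hns]; ring)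
    · rintro ⟨⟨hy, _⟩, hne⟩; exact ⟨hy, hne⟩
  have hstepL : ∑ᶠ ξ ∈ {ξ : X | TL ξ = ξ'}, k (ξ, η) * Complex.exp (AL ξ)
      = ∑ᶠ ξ ∈ sL, k (ξ, η) * Complex.exp (AL ξ) := by
    apply finsum_mem_inter_support_eq _ _ _
    ext x
    simp only [Set.mem_inter_iff, Function.mem_support, hsL, Set.mem_setOf_eq]
    constructor
    · rintro ⟨hx, hne⟩
      refine ⟨⟨hx, ?_⟩, hne⟩
      by_contra hns
      exact hne (by rw [hk0 _ hns]; ring)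
    · rintro ⟨⟨hx, _⟩, hne⟩; exact ⟨hx, hne⟩
  rw [hstepR, hstepL]
  refine (finsum_mem_eq_of_bijOn (fun ξ => (That (ξ, η)).2) ?_ ?_).symm
  · constructor
    · rintro x ⟨hTL, hmem⟩
      have h1 : (That (x, η)).1 = ξ' := by rw [hL _ hmem]; exact hTL
      have h2 : That (x, η) ∈ Sig := hbij.mapsTo hmem
      refine ⟨(hR _ hmem).symm, ?_⟩
      have : That (x, η) = (ξ', (That (x, η)).2) := by
        rw [Prod.ext_iff]; exact ⟨h1, rfl⟩
      rwa [this] at h2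
    constructor
    · rintro x₁ ⟨hTL₁, hmem₁⟩ x₂ ⟨hTL₂, hmem₂⟩ he
      have h1 : That (x₁, η) = That (x₂, η) := by
        rw [Prod.ext_iff]
        refine ⟨?_, he⟩
        rw [hL _ hmem₁, hL _ hmem₂]; exact hTL₁.trans hTL₂.symm
      have := hbij.injOn hmem₁ hmem₂ h1
      exact congrArg Prod.fst this
    · rintro y ⟨hTR, hmem⟩
      obtain ⟨p, hp, hpe⟩ := hbij.surjOn hmem
      have hp1 : TL p.1 = ξ' := by rw [← hL _ hp, hpe]
      have hp2 : p.2 = η := by rw [hR _ hp, hpe]; exact hTR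
      have hpp : (p.1, η) = p := by rw [Prod.ext_iff]; exact ⟨rfl, hp2.symm⟩
      refine ⟨p.1, ⟨hp1, by rwa [hpp]⟩, ?_⟩
      show (That (p.1, η)).2 = y
      rw [hpp, hpe]
  · rintro x ⟨hTL, hmem⟩
    have h1 : (That (x, η)).1 = ξ' := by rw [hL _ hmem]; exact hTL
    have h2 : That (x, η) = (ξ', (That (x, η)).2) := by
      rw [Prod.ext_iff]; exact ⟨h1, rfl⟩
    have := hinv _ hmem
    show k (x, η) * Complex.exp (AL x)
        = k (ξ', (That (x, η)).2) * Complex.exp (AR (That (x, η)).2)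
    rw [this, congrArg k h2]
end

section
/- Let Y be a measurable space, T_R : Y → Y a map with finite preimage sets, A_R : Y → ℂ, ν a finite complex measure on Y, and λ ∈ ℂ, and define (L_R φ)(η) = Σ_{η' : T_R(η') = η} e^{A_R(η')}·φ(η'). Assume ∫ (L_R φ) dν = λ·∫ φ dν for every bounded measurable φ : Y → ℂ. Let X be a set, T_L : X → X a map with finite preimage sets, A_L : X → ℂ, and k : X × Y → ℂ such that for each ξ ∈ X the function k(ξ,·) is bounded and measurable, and such that for all ξ' ∈ X and η ∈ Y: Σ_{ξ : T_L(ξ) = ξ'} e^{A_L(ξ)}·k(ξ,η) = (L_R k(ξ',·))(η). Define ψ(ξ) = ∫ k(ξ,η) dν(η). Then for every ξ' ∈ X: Σ_{ξ : T_L(ξ) = ξ'} e^{A_L(ξ)}·ψ(ξ) = λ·ψ(ξ'); that is, L_L ψ = λψ. -/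
open Set MeasureTheory

noncomputable section

/-- Integration of a complex-valued function against a (finite) complex measure, via the
Jordan decompositions of its real and imaginary parts. -/
def cInt {Y : Type*} [MeasurableSpace Y] (ν : MeasureTheory.ComplexMeasure Y) (f : Y → ℂ) : ℂ :=
  ((∫ y, f y ∂(MeasureTheory.ComplexMeasure.re ν).toJordanDecomposition.posPart) -
      ∫ y, f y ∂(MeasureTheory.ComplexMeasure.re ν).toJordanDecomposition.negPart) +
    Complex.I *
      ((∫ y, f y ∂(MeasureTheory.ComplexMeasure.im ν).toJordanDecomposition.posPart) -
        ∫ y, f y ∂(MeasureTheory.ComplexMeasure.im ν).toJordanDecomposition.negPart)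

private lemma integrable_of_bdd {Y : Type*} [MeasurableSpace Y] (μ : Measure Y)
    [IsFiniteMeasure μ] {f : Y → ℂ} (hf : Measurable f) (hb : ∃ C : ℝ, ∀ y, ‖f y‖ ≤ C) :
    Integrable f μ := by
  obtain ⟨C, hC⟩ := hb
  exact ⟨hf.aestronglyMeasurable, HasFiniteIntegral.of_bounded (C := C) (ae_of_all μ hC)⟩

private lemma cInt_finset_sum {Y ι : Type*} [MeasurableSpace Y]
    (ν : MeasureTheory.ComplexMeasure Y) (s : Finset ι) (f : ι → Y → ℂ)
    (hm : ∀ i ∈ s, Measurable (f i)) (hb : ∀ i ∈ s, ∃ C : ℝ, ∀ y, ‖f i y‖ ≤ C) :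
    cInt ν (fun y => ∑ i ∈ s, f i y) = ∑ i ∈ s, cInt ν (f i) := by
  have key : ∀ μ : Measure Y, IsFiniteMeasure μ →
      (∫ y, ∑ i ∈ s, f i y ∂μ) = ∑ i ∈ s, ∫ y, f i y ∂μ := fun μ hμ =>
    integral_finset_sum s fun i hi => integrable_of_bdd μ (hm i hi) (hb i hi)
  simp only [cInt, key _ inferInstance]
  rw [← Finset.sum_sub_distrib, ← Finset.sum_sub_distrib, Finset.mul_sum,
    ← Finset.sum_add_distrib]

/-- Item 3 of the Remark preceding Lemma 8 of the paper: integrating a kernel intertwining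
the left and right Ruelle transfer operators against an eigenmeasure `ν` of the dual right
transfer operator produces an eigenfunction `ψ(ξ) = ∫ k(ξ,η) dν(η)` of the left transfer
operator with the same eigenvalue. -/
theorem stmt18 {X Y : Type*} [MeasurableSpace Y]
    (TR : Y → Y) (AR : Y → ℂ) (ν : MeasureTheory.ComplexMeasure Y) (lam : ℂ)
    (hfinR : ∀ η : Y, {η' : Y | TR η' = η}.Finite)
    (heig : ∀ φ : Y → ℂ, Measurable φ → (∃ C : ℝ, ∀ y : Y, ‖φ y‖ ≤ C) →
      cInt ν (fun η => ∑ᶠ η' ∈ {η' : Y | TR η' = η}, Complex.exp (AR η') * φ η')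
        = lam * cInt ν φ)
    (TL : X → X) (AL : X → ℂ)
    (hfinL : ∀ ξ' : X, {ξ : X | TL ξ = ξ'}.Finite)
    (k : X → Y → ℂ)
    (hkmeas : ∀ ξ : X, Measurable (k ξ))
    (hkbdd : ∀ ξ : X, ∃ C : ℝ, ∀ η : Y, ‖k ξ η‖ ≤ C)
    (hker : ∀ (ξ' : X) (η : Y),
      ∑ᶠ ξ ∈ {ξ : X | TL ξ = ξ'}, Complex.exp (AL ξ) * k ξ η
        = ∑ᶠ η' ∈ {η' : Y | TR η' = η}, Complex.exp (AR η') * k ξ' η')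
    (ψ : X → ℂ) (hψ : ∀ ξ : X, ψ ξ = cInt ν (k ξ)) :
    ∀ ξ' : X, ∑ᶠ ξ ∈ {ξ : X | TL ξ = ξ'}, Complex.exp (AL ξ) * ψ ξ = lam * ψ ξ' := by
  intro ξ'
  have hfin := hfinL ξ'
  have hsum : ∀ g : X → ℂ, (∑ᶠ ξ ∈ {ξ : X | TL ξ = ξ'}, g ξ)
      = ∑ ξ ∈ hfin.toFinset, g ξ := fun g =>
    finsum_mem_eq_finite_toFinset_sum g hfin
  have hcmul : ∀ (c : ℂ) (f : Y → ℂ), cInt ν (fun y => c * f y) = c * cInt ν f := by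
    intro c f
    simp only [cInt, integral_const_mul]
    ring
  rw [hsum]
  calc ∑ ξ ∈ hfin.toFinset, Complex.exp (AL ξ) * ψ ξ
      = ∑ ξ ∈ hfin.toFinset, cInt ν (fun η => Complex.exp (AL ξ) * k ξ η) := by
        refine Finset.sum_congr rfl fun ξ _ => ?_
        rw [hψ, hcmul]
    _ = cInt ν (fun η => ∑ ξ ∈ hfin.toFinset, Complex.exp (AL ξ) * k ξ η) := by
        refine (cInt_finset_sum ν _ _ (fun i _ => (measurable_const.mul (hkmeas i)))
          (fun i _ => ?_)).symm
        obtain ⟨C, hC⟩ := hkbdd i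
        exact ⟨‖Complex.exp (AL i)‖ * C, fun y => by
          rw [Pi.mul_apply, norm_mul]
          exact mul_le_mul_of_nonneg_left (hC y) (norm_nonneg _)⟩
    _ = cInt ν (fun η => ∑ᶠ η' ∈ {η' : Y | TR η' = η}, Complex.exp (AR η') * k ξ' η') := by
        congr 1
        funext η
        rw [← hker ξ' η, hsum]
    _ = lam * cInt ν (k ξ') := heig (k ξ') (hkmeas ξ') (hkbdd ξ')
    _ = lam * ψ ξ' := by rw [hψ]
end
end

section
/- Let u ≠ v be real numbers and let w = x + iy with y > 0 lie on the Euclidean semicircle (x − (u+v)/2)² + y² = ((u−v)/2)², i.e. on the hyperbolic geodesic of the upper half-plane with endpoints u and v. Define the half-plane Poisson kernel P(w,t) = (1+t²)·y/((x−t)² + y²) for t ∈ ℝ. Then P(w,u)·P(w,v) = (1+u²)(1+v²)/(u−v)²; equivalently, ((x−u)² + y²)·((x−v)² + y²) = (u−v)²·y². -/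
/-- The upper half-plane form of the Gromov-distance/involution-kernel identity: for
`w = x + iy` on the geodesic semicircle with endpoints `u ≠ v` on the real axis,
`P(w,u)·P(w,v) = (1+u²)(1+v²)/(u−v)²`, where `P(w,t) = (1+t²)y/((x−t)²+y²)`; equivalently
`((x-u)²+y²)((x-v)²+y²) = (u-v)²y²`. -/
theorem stmt19 (u v x y : ℝ) (huv : u ≠ v) (hy : 0 < y)
    (hcirc : (x - (u + v) / 2) ^ 2 + y ^ 2 = ((u - v) / 2) ^ 2) :
    ((1 + u ^ 2) * y / ((x - u) ^ 2 + y ^ 2)) * ((1 + v ^ 2) * y / ((x - v) ^ 2 + y ^ 2))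
        = (1 + u ^ 2) * (1 + v ^ 2) / (u - v) ^ 2
    ∧ ((x - u) ^ 2 + y ^ 2) * ((x - v) ^ 2 + y ^ 2) = (u - v) ^ 2 * y ^ 2 := by
  have hy2 : y ^ 2 = -((x - u) * (x - v)) := by linear_combination hcirc
  have h2 : ((x - u) ^ 2 + y ^ 2) * ((x - v) ^ 2 + y ^ 2) = (u - v) ^ 2 * y ^ 2 := by
    linear_combination (y ^ 2 + (x - u) ^ 2 + (x - v) ^ 2 - (x - u) * (x - v) - (u - v) ^ 2) * hy2
  refine ⟨?_, h2⟩
  have ha : (x - u) ^ 2 + y ^ 2 ≠ 0 := by positivity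
  have hb : (x - v) ^ 2 + y ^ 2 ≠ 0 := by positivity
  have hd : (u - v) ≠ 0 := sub_ne_zero.mpr huv
  field_simp
  linear_combination -h2
end
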